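/- arXiv:2012.14202 — 5 statements merged into one kernel-verified Lean document; each statement's English description precedes it below -/
import Mathlib

section
/- Let C ⊆ ℝ^k be a full cone and let {C_1,…,C_p} be a sector decomposition of C. If W = C_i ∩ C_ℓ is a wall for some i ≠ ℓ, then the pair of indices is unique: for any i′ ≠ ℓ′ with C_{i′} ∩ C_{ℓ′} = W one has {i′, ℓ′} = {i, ℓ}. -/
noncomputable section

/-- The conic hull of a set `S`: all finite nonnegative real linear combinations
of elements of `S`. -/
def coneHull {V : Type*} [AddCommGroup V] [Module ℝ V] (S : Set V) : Set V :=
  { x | ∃ (n : ℕ) (c : Fin n → ℝ) (v : Fin n → V),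
      (∀ i, 0 ≤ c i) ∧ (∀ i, v i ∈ S) ∧ x = ∑ i, c i • v i }

/-- A cone is the conic hull of a finite set. -/
def IsCone {V : Type*} [AddCommGroup V] [Module ℝ V] (C : Set V) : Prop :=
  ∃ S : Finset V, C = coneHull (S : Set V)

/-- The dimension of a cone: the dimension of its linear span. -/
def coneDim {V : Type*} [AddCommGroup V] [Module ℝ V] (C : Set V) : ℕ :=
  Module.finrank ℝ (Submodule.span ℝ C)

/-- The rank of a cone: the minimum cardinality of a finite generating set. -/
def coneRank {V : Type*} [AddCommGroup V] [Module ℝ V] (C : Set V) : ℕ :=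
  sInf { r : ℕ | ∃ S : Finset V, S.card = r ∧ C = coneHull (S : Set V) }

/-- A full cone: a cone whose dimension equals the ambient dimension. -/
def IsFullCone {V : Type*} [AddCommGroup V] [Module ℝ V] (C : Set V) : Prop :=
  IsCone C ∧ coneDim C = Module.finrank ℝ V

/-- A sector: a cone whose rank equals its dimension. -/
def IsSector {V : Type*} [AddCommGroup V] [Module ℝ V] (C : Set V) : Prop :=
  IsCone C ∧ coneRank C = coneDim C

/-- A sector decomposition of a full cone `C`: a finite family of subcones, each a full
sector, whose union is `C`, with pairwise intersections of empty interior. -/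
def IsSectorDecomposition {V : Type*} [AddCommGroup V] [Module ℝ V] [TopologicalSpace V]
    {p : ℕ} (C : Set V) (F : Fin p → Set V) : Prop :=
  (∀ i, F i ⊆ C) ∧ (∀ i, IsSector (F i) ∧ IsFullCone (F i)) ∧
  (C = ⋃ i, F i) ∧ ∀ i j, i ≠ j → interior (F i ∩ F j) = ∅

/-- The intersection of two cones is a wall (of dimension `d`, one less than the ambient
dimension) if it is a cone of dimension `d`. -/
def IsWallDim {V : Type*} [AddCommGroup V] [Module ℝ V] (C C' : Set V) (d : ℕ) : Prop :=
  IsCone (C ∩ C') ∧ coneDim (C ∩ C') = d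


section Aux

variable {Vv : Type*} [AddCommGroup Vv] [Module ℝ Vv]

lemma zero_mem_of_isCone {C : Set Vv} (h : IsCone C) : (0 : Vv) ∈ C := by
  obtain ⟨S, rfl⟩ := h
  exact ⟨0, Fin.elim0, Fin.elim0, fun i => i.elim0, fun i => i.elim0, by simp⟩

lemma add_mem_of_isCone {C : Set Vv} (h : IsCone C) {x y : Vv} (hx : x ∈ C) (hy : y ∈ C) :
    x + y ∈ C := by
  obtain ⟨S, rfl⟩ := h
  obtain ⟨n, c, v, hc, hv, rfl⟩ := hx
  obtain ⟨m, d, w, hd, hw, rfl⟩ := hy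
  refine ⟨n + m, Fin.append c d, Fin.append v w, ?_, ?_, ?_⟩
  · intro i
    refine Fin.addCases (fun j => ?_) (fun j => ?_) i <;>
      simp [Fin.append_left, Fin.append_right, hc _, hd _]
  · intro i
    refine Fin.addCases (fun j => ?_) (fun j => ?_) i <;>
      simp [Fin.append_left, Fin.append_right, hv _, hw _]
  · rw [Fin.sum_univ_add]
    simp [Fin.append_left, Fin.append_right]

lemma smul_mem_of_isCone {C : Set Vv} (h : IsCone C) {t : ℝ} (ht : 0 ≤ t) {x : Vv}
    (hx : x ∈ C) : t • x ∈ C := by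
  obtain ⟨S, rfl⟩ := h
  obtain ⟨n, c, v, hc, hv, rfl⟩ := hx
  exact ⟨n, fun i => t * c i, v, fun i => mul_nonneg ht (hc i), hv, by
    rw [Finset.smul_sum]; simp [smul_smul]⟩

lemma convex_of_isCone {C : Set Vv} (h : IsCone C) : Convex ℝ C :=
  fun _ hx _ hy _ _ ha hb _ =>
    add_mem_of_isCone h (smul_mem_of_isCone h ha hx) (smul_mem_of_isCone h hb hy)

lemma span_eq_diff {W : Set Vv} (hadd : ∀ x ∈ W, ∀ y ∈ W, x + y ∈ W)
    (hsmul : ∀ (t : ℝ), 0 ≤ t → ∀ x ∈ W, t • x ∈ W) (h0 : (0 : Vv) ∈ W) :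
    ∀ x ∈ Submodule.span ℝ W, ∃ w1 ∈ W, ∃ w2 ∈ W, x = w2 - w1 := by
  intro x hx
  induction hx using Submodule.span_induction with
  | mem w hw => exact ⟨0, h0, w, hw, by simp⟩
  | zero => exact ⟨0, h0, 0, h0, by simp⟩
  | add a b _ _ iha ihb =>
      obtain ⟨w1, h1, w2, h2, rfl⟩ := iha
      obtain ⟨w3, h3, w4, h4, rfl⟩ := ihb
      exact ⟨w1 + w3, hadd _ h1 _ h3, w2 + w4, hadd _ h2 _ h4, by abel⟩
  | smul t a _ iha =>
      obtain ⟨w1, h1, w2, h2, rfl⟩ := iha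
      rcases le_or_gt 0 t with ht | ht
      · exact ⟨t • w1, hsmul t ht _ h1, t • w2, hsmul t ht _ h2, by rw [smul_sub]⟩
      · exact ⟨(-t) • w2, hsmul _ (by linarith) _ h2, (-t) • w1, hsmul _ (by linarith) _ h1,
          by rw [smul_sub, neg_smul, neg_smul]; abel⟩

end Aux

/-- Key geometric lemma: three full cones `A`, `B`, `D` such that `A ∩ B` is a wall
contained in `D`, with pairwise empty interiors of intersections, are impossible. -/
lemma key_three_cones {k : ℕ} (A B D : Set (Fin k → ℝ))
    (hA : IsCone A) (hB : IsCone B) (hD : IsCone D)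
    (hAdim : coneDim A = k) (hBdim : coneDim B = k) (hDdim : coneDim D = k)
    (hWD : A ∩ B ⊆ D) (hWdim : coneDim (A ∩ B) = k - 1)
    (hAB : interior (A ∩ B) = ∅) (hAD : interior (A ∩ D) = ∅)
    (hBD : interior (B ∩ D) = ∅) : False := by
  classical
  rcases Nat.eq_zero_or_pos k with hk0 | hk
  · subst hk0
    haveI : Subsingleton (Fin 0 → ℝ) := ⟨fun a b => funext fun i => i.elim0⟩
    have huniv : A ∩ B = Set.univ := Set.eq_univ_of_forall fun y =>
      Subsingleton.elim (0 : Fin 0 → ℝ) y ▸ ⟨zero_mem_of_isCone hA, zero_mem_of_isCone hB⟩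
    rw [huniv, interior_univ] at hAB
    exact Set.univ_nonempty.ne_empty hAB
  have hfin : Module.finrank ℝ (Fin k → ℝ) = k := Module.finrank_fin_fun ℝ
  set W : Set (Fin k → ℝ) := A ∩ B with hWdef
  have hWadd : ∀ x ∈ W, ∀ y ∈ W, x + y ∈ W := fun x hx y hy =>
    ⟨add_mem_of_isCone hA hx.1 hy.1, add_mem_of_isCone hB hx.2 hy.2⟩
  have hWsmul : ∀ (t : ℝ), 0 ≤ t → ∀ x ∈ W, t • x ∈ W := fun t ht x hx =>
    ⟨smul_mem_of_isCone hA ht hx.1, smul_mem_of_isCone hB ht hx.2⟩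
  have hW0 : (0 : Fin k → ℝ) ∈ W := ⟨zero_mem_of_isCone hA, zero_mem_of_isCone hB⟩
  set H : Submodule ℝ (Fin k → ℝ) := Submodule.span ℝ W with hHdef
  have hHrank : Module.finrank ℝ H = k - 1 := hWdim
  have hHlt : H < ⊤ := by
    refine lt_top_iff_ne_top.2 fun h => ?_
    rw [h, finrank_top, hfin] at hHrank
    omega
  obtain ⟨f, hf0, hfmap⟩ := Submodule.exists_dual_map_eq_bot_of_lt_top hHlt inferInstance
  have hHker : H ≤ LinearMap.ker f := fun x hx => by
    have hmem : f x ∈ H.map f := ⟨x, hx, rfl⟩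
    rw [hfmap] at hmem
    simpa using hmem
  have hker_rank : Module.finrank ℝ (LinearMap.ker f) + 1 = k := by
    have h := Module.Dual.finrank_ker_add_one_of_ne_zero hf0
    rw [hfin] at h
    exact h
  have hHeq : H = LinearMap.ker f :=
    Submodule.eq_of_le_of_finrank_eq hHker (by omega)
  -- interiors of full cones are nonempty
  have hint : ∀ X : Set (Fin k → ℝ), IsCone X → coneDim X = k → (interior X).Nonempty := by
    intro X hX hXdim
    have hconv := convex_of_isCone hX
    have h0 := zero_mem_of_isCone hX
    have hspan : Submodule.span ℝ X = ⊤ := Submodule.eq_top_of_finrank_eq (by rw [hfin]; exact hXdim)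
    rw [Convex.interior_nonempty_iff_affineSpan_eq_top hconv,
      AffineSubspace.affineSpan_eq_top_iff_vectorSpan_eq_top_of_nonempty ℝ _ _ ⟨0, h0⟩,
      eq_top_iff, ← hspan, vectorSpan_def]
    exact Submodule.span_mono fun x hx => ⟨x, hx, 0, h0, by simp⟩
  -- each full cone has an interior point where f does not vanish
  have hsign : ∀ X : Set (Fin k → ℝ), IsCone X → coneDim X = k →
      ∃ a ∈ interior X, f a ≠ 0 := by
    intro X hX hXdim
    obtain ⟨y, hy⟩ := hint X hX hXdim
    obtain ⟨v, hv⟩ : ∃ v, f v ≠ 0 := by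
      by_contra h
      push_neg at h
      exact hf0 (LinearMap.ext fun v => by simp [h v])
    by_cases hfy : f y = 0
    · obtain ⟨ε, hε, hball⟩ := Metric.isOpen_iff.1 isOpen_interior y hy
      set δ : ℝ := ε / (2 * (‖v‖ + 1)) with hδdef
      have hδpos : 0 < δ := by positivity
      refine ⟨y + δ • v, hball ?_, ?_⟩
      · rw [Metric.mem_ball, dist_eq_norm, add_sub_cancel_left, norm_smul,
          Real.norm_eq_abs, abs_of_pos hδpos]
        have hv1 : 0 ≤ ‖v‖ := norm_nonneg v
        rw [hδdef]
        rw [div_mul_eq_mul_div, div_lt_iff₀ (by positivity)]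
        nlinarith
      · rw [map_add, map_smul, hfy, zero_add, smul_eq_mul]
        exact mul_ne_zero (ne_of_gt hδpos) hv
    · exact ⟨y, hy, hfy⟩
  -- interior of a cone is stable under positive scaling
  have hscale : ∀ X : Set (Fin k → ℝ), IsCone X → ∀ c : ℝ, 0 < c →
      ∀ a ∈ interior X, c • a ∈ interior X := by
    intro X hX c hc a ha
    have hopen : IsOpen ((c • ·) '' interior X) := (isOpenMap_smul₀ (ne_of_gt hc)) _ isOpen_interior
    have hsub : ((c • ·) '' interior X) ⊆ X := by
      rintro _ ⟨u, hu, rfl⟩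
      exact smul_mem_of_isCone hX hc.le (interior_subset hu)
    exact interior_maximal hsub hopen ⟨a, ha, rfl⟩
  -- two cones containing W with interior points of equal f-value must overlap
  have hpair : ∀ X Y : Set (Fin k → ℝ), IsCone X → IsCone Y → W ⊆ X → W ⊆ Y →
      interior (X ∩ Y) = ∅ →
      ∀ a ∈ interior X, ∀ b ∈ interior Y, f a = f b → False := by
    intro X Y hX hY hWX hWY hXY a ha b hb hab
    have hmem : a - b ∈ H := by
      rw [hHeq, LinearMap.mem_ker, map_sub, hab, sub_self]
    obtain ⟨w1, h1, w2, h2, heq⟩ := span_eq_diff hWadd hWsmul hW0 _ hmem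
    have hx : a + w1 = w2 + b := sub_eq_sub_iff_add_eq_add.1 heq
    have haX : w1 + a ∈ interior X := by
      have hopen : IsOpen ((w1 + ·) '' interior X) := (isOpenMap_add_left w1) _ isOpen_interior
      have hsub : ((w1 + ·) '' interior X) ⊆ X := by
        rintro _ ⟨u, hu, rfl⟩
        exact add_mem_of_isCone hX (hWX h1) (interior_subset hu)
      exact interior_maximal hsub hopen ⟨a, ha, rfl⟩
    have hbY : w2 + b ∈ interior Y := by
      have hopen : IsOpen ((w2 + ·) '' interior Y) := (isOpenMap_add_left w2) _ isOpen_interior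
      have hsub : ((w2 + ·) '' interior Y) ⊆ Y := by
        rintro _ ⟨u, hu, rfl⟩
        exact add_mem_of_isCone hY (hWY h2) (interior_subset hu)
      exact interior_maximal hsub hopen ⟨b, hb, rfl⟩
    have hxy : w1 + a = w2 + b := by rw [add_comm w1 a, hx]
    rw [hxy] at haX
    have hcontr : w2 + b ∈ interior (X ∩ Y) := by
      rw [interior_inter]; exact ⟨haX, hbY⟩
    rw [hXY] at hcontr
    exact hcontr
  -- two cones containing W with interior points of the same f-sign must overlap
  have hmatch : ∀ X Y : Set (Fin k → ℝ), IsCone X → IsCone Y → W ⊆ X → W ⊆ Y →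
      interior (X ∩ Y) = ∅ →
      ∀ a ∈ interior X, ∀ b ∈ interior Y, 0 < f a * f b → False := by
    intro X Y hX hY hWX hWY hXY a ha b hb hs
    have hfb : f b ≠ 0 := by
      intro h
      rw [h, mul_zero] at hs
      exact lt_irrefl _ hs
    have hcpos : 0 < f a / f b := by
      rcases mul_pos_iff.1 hs with ⟨h1, h2⟩ | ⟨h1, h2⟩
      · exact div_pos h1 h2
      · exact div_pos_of_neg_of_neg h1 h2
    have hb' : (f a / f b) • b ∈ interior Y := hscale Y hY _ hcpos b hb
    refine hpair X Y hX hY hWX hWY hXY a ha _ hb' ?_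
    rw [map_smul, smul_eq_mul, div_mul_cancel₀ _ hfb]
  obtain ⟨a, ha, hfa⟩ := hsign A hA hAdim
  obtain ⟨b, hb, hfb⟩ := hsign B hB hBdim
  obtain ⟨d, hd, hfd⟩ := hsign D hD hDdim
  have hWA : W ⊆ A := Set.inter_subset_left
  have hWB : W ⊆ B := Set.inter_subset_right
  have htri : 0 < f a * f b ∨ 0 < f a * f d ∨ 0 < f b * f d := by
    rcases lt_or_gt_of_ne hfa with h1 | h1 <;> rcases lt_or_gt_of_ne hfb with h2 | h2 <;>
      rcases lt_or_gt_of_ne hfd with h3 | h3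
    · exact Or.inl (mul_pos_of_neg_of_neg h1 h2)
    · exact Or.inl (mul_pos_of_neg_of_neg h1 h2)
    · exact Or.inr (Or.inl (mul_pos_of_neg_of_neg h1 h3))
    · exact Or.inr (Or.inr (mul_pos h2 h3))
    · exact Or.inr (Or.inr (mul_pos_of_neg_of_neg h2 h3))
    · exact Or.inr (Or.inl (mul_pos h1 h3))
    · exact Or.inl (mul_pos h1 h2)
    · exact Or.inl (mul_pos h1 h2)
  rcases htri with h | h | h
  · exact hmatch A B hA hB hWA hWB hAB a ha b hb h
  · exact hmatch A D hA hD hWA hWD hAD a ha d hd h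
  · exact hmatch B D hB hD hWB hWD hBD b hb d hd h

/-- In a sector decomposition of a full cone `C ⊆ ℝ^k`, if `W = C_i ∩ C_ℓ`
is a wall (for `i ≠ ℓ`), then the pair of indices producing this wall is unique. -/
theorem stmt_1 {k p : ℕ} (C : Set (Fin k → ℝ)) (F : Fin p → Set (Fin k → ℝ))
    (hC : IsFullCone C) (hdecomp : IsSectorDecomposition C F)
    (i l : Fin p) (hil : i ≠ l) (W : Set (Fin k → ℝ))
    (hW : W = F i ∩ F l) (hwall : IsWallDim (F i) (F l) (k - 1)) :
    ∀ i' l' : Fin p, i' ≠ l' → F i' ∩ F l' = W →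
      (i' = i ∧ l' = l) ∨ (i' = l ∧ l' = i) := by
  intro i' l' hil' hW'
  by_contra hcon
  push_neg at hcon
  obtain ⟨hdsub, hsect, hcup, hdisj⟩ := hdecomp
  have hcone : ∀ j, IsCone (F j) := fun j => (hsect j).2.1
  have hdim : ∀ j, coneDim (F j) = k := fun j =>
    (hsect j).2.2.trans (Module.finrank_fin_fun ℝ)
  have hmain : ∀ m : Fin p, m ≠ i → m ≠ l → ¬ W ⊆ F m := by
    intro m hmi hml hsub
    refine key_three_cones (F i) (F l) (F m) (hcone i) (hcone l) (hcone m)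
      (hdim i) (hdim l) (hdim m) ?_ hwall.2 (hdisj i l hil)
      (hdisj i m fun h => hmi h.symm) (hdisj l m fun h => hml h.symm)
    rw [← hW]; exact hsub
  have h1 : W ⊆ F i' := by rw [← hW']; exact Set.inter_subset_left
  have h2 : W ⊆ F l' := by rw [← hW']; exact Set.inter_subset_right
  by_cases hii : i' = i
  · exact hmain l' (fun h => hil' (hii.trans h.symm)) (hcon.1 hii) h2
  · by_cases hli : i' = l
    · exact hmain l' (hcon.2 hli) (fun h => hil' (hli.trans h.symm)) h2
    · exact hmain i' hii hli h1
end
end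

section
/- Let k, n, m, p be positive integers with m ≥ n. Let C ⊆ ℝ_{≥0}^k × ℝ^n be a cone containing the standard basis vectors e_1,…,e_k and with π_n(C) = ℝ^n (π_n being projection onto the ℝ^n factor). Let x_1,…,x_m ∈ C and let J_1,…,J_p ⊆ {1,…,m} be index sets each of cardinality n. For each i = 1,…,p set C_i = conic hull of {e_1,…,e_k} ∪ {x_j : j ∈ J_i} and D_i = conic hull of {π_n(x_j) : j ∈ J_i} ⊆ ℝ^n. Assume (a) C = C_1 ∪ ⋯ ∪ C_p, and (b) each D_i is a full sector in ℝ^n and {D_1,…,D_p} is a sector decomposition of ℝ^n. Then {C_1,…,C_p} is a sector decomposition of C (in particular each C_i is a full sector of dimension k+n); moreover π_n(C_i) = D_i for each i, and π_n(C_i ∩ C_ℓ) = D_i ∩ D_ℓ for all distinct i, ℓ. -/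
noncomputable section

namespace ConeAux

variable {V W : Type*} [AddCommGroup V] [Module ℝ V] [AddCommGroup W] [Module ℝ W]

lemma mem_coneHull_self {S : Set V} {s : V} (hs : s ∈ S) : s ∈ coneHull S :=
  ⟨1, fun _ => 1, fun _ => s, fun _ => zero_le_one, fun _ => hs, by simp⟩

lemma subset_coneHull (S : Set V) : S ⊆ coneHull S := fun _ h => mem_coneHull_self h

lemma zero_mem_coneHull (S : Set V) : (0:V) ∈ coneHull S :=
  ⟨0, Fin.elim0, Fin.elim0, fun i => i.elim0, fun i => i.elim0, by simp⟩

lemma coneHull_mono {S T : Set V} (h : S ⊆ T) : coneHull S ⊆ coneHull T := by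
  rintro z ⟨q, c, v, hc, hv, rfl⟩
  exact ⟨q, c, v, hc, fun i => h (hv i), rfl⟩

lemma add_mem_coneHull {S : Set V} {a b : V} (ha : a ∈ coneHull S) (hb : b ∈ coneHull S) :
    a + b ∈ coneHull S := by
  obtain ⟨q, c, v, hc, hv, rfl⟩ := ha
  obtain ⟨r, d, w, hd, hw, rfl⟩ := hb
  refine ⟨q + r, Fin.append c d, Fin.append v w, ?_, ?_, ?_⟩
  · intro i
    refine Fin.addCases (fun j => ?_) (fun j => ?_) i <;> simp [hc, hd]
  · intro i
    refine Fin.addCases (fun j => ?_) (fun j => ?_) i <;> simp [hv, hw]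
  · rw [Fin.sum_univ_add]
    congr 1 <;> exact (Finset.sum_congr rfl fun i _ => by simp)

lemma smul_mem_coneHull {S : Set V} {a : V} {t : ℝ} (ht : 0 ≤ t) (ha : a ∈ coneHull S) :
    t • a ∈ coneHull S := by
  obtain ⟨q, c, v, hc, hv, rfl⟩ := ha
  refine ⟨q, fun i => t * c i, v, fun i => mul_nonneg ht (hc i), hv, ?_⟩
  rw [Finset.smul_sum]
  exact Finset.sum_congr rfl fun i _ => (mul_smul t (c i) (v i)).symm

lemma sum_mem_coneHull {S : Set V} {ι : Type*} (s : Finset ι) (f : ι → V)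
    (hf : ∀ i ∈ s, f i ∈ coneHull S) : ∑ i ∈ s, f i ∈ coneHull S :=
  Finset.sum_induction f (· ∈ coneHull S) (fun _ _ => add_mem_coneHull)
    (zero_mem_coneHull S) hf

lemma coneHull_min {S T : Set V} (h : S ⊆ coneHull T) : coneHull S ⊆ coneHull T := by
  rintro z ⟨q, c, v, hc, hv, rfl⟩
  exact sum_mem_coneHull Finset.univ _ fun i _ => smul_mem_coneHull (hc i) (h (hv i))

lemma image_coneHull (f : V →ₗ[ℝ] W) (S : Set V) :
    f '' coneHull S = coneHull (f '' S) := by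
  ext y
  constructor
  · rintro ⟨z, ⟨q, c, v, hc, hv, rfl⟩, rfl⟩
    exact ⟨q, c, fun i => f (v i), hc, fun i => ⟨v i, hv i, rfl⟩, by
      simp [map_sum, map_smul]⟩
  · rintro ⟨q, c, w, hc, hw, rfl⟩
    choose v hv hfv using hw
    exact ⟨∑ i, c i • v i, ⟨q, c, v, hc, hv, rfl⟩, by simp [map_sum, map_smul, hfv]⟩

lemma span_coneHull (S : Set V) :
    Submodule.span ℝ (coneHull S) = Submodule.span ℝ S := by
  refine le_antisymm (Submodule.span_le.2 ?_) (Submodule.span_mono (subset_coneHull S))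
  rintro z ⟨q, c, v, hc, hv, rfl⟩
  exact Submodule.sum_mem _ fun i _ =>
    Submodule.smul_mem _ _ (Submodule.subset_span (hv i))

lemma coneHull_zero_union (T : Set V) : coneHull ({(0:V)} ∪ T) = coneHull T := by
  refine le_antisymm (coneHull_min ?_) (coneHull_mono Set.subset_union_right)
  rintro z (rfl | hz)
  · exact zero_mem_coneHull T
  · exact mem_coneHull_self hz

lemma sum_single {k n : ℕ} (v : Fin k → ℝ) :
    ∑ a, v a • ((Pi.single a 1 : Fin k → ℝ), (0 : Fin n → ℝ)) = ((v, 0) : (Fin k → ℝ) × (Fin n → ℝ)) := by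
  ext j
  · simp only [Prod.fst_sum, Prod.smul_mk, Finset.sum_apply, Pi.smul_apply,
      Pi.single_apply, smul_eq_mul, mul_ite, mul_one, mul_zero]
    rw [Finset.sum_ite_eq Finset.univ j v]
    simp
  · simp [Prod.snd_sum]

end ConeAux

/-- Given a cone `C ⊆ ℝ_{≥0}^k × ℝ^n` containing the first `k` standard basis
vectors with `π_n(C) = ℝ^n`, points `x_1,…,x_m ∈ C`, index sets `J_1,…,J_p` of cardinality
`n`, subcones `C_i = coneHull({e_1,…,e_k} ∪ {x_j : j ∈ J_i})` and
`D_i = coneHull({π_n(x_j) : j ∈ J_i})`: if `C = ∪ C_i` and `{D_i}` is a sector decomposition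
of `ℝ^n` (by full sectors), then `{C_i}` is a sector decomposition of `C` with each `C_i`
of dimension `k + n`; moreover `π_n(C_i) = D_i` and `π_n(C_i ∩ C_ℓ) = D_i ∩ D_ℓ`. -/
theorem stmt_3 (k n m p : ℕ) (hk : 0 < k) (hn : 0 < n) (hm : 0 < m) (hp : 0 < p)
    (hmn : n ≤ m)
    (C : Set ((Fin k → ℝ) × (Fin n → ℝ)))
    (hcone : IsCone C)
    (hsub : C ⊆ {q : (Fin k → ℝ) × (Fin n → ℝ) | ∀ i, 0 ≤ q.1 i})
    (he : ∀ i : Fin k, ((Pi.single i 1 : Fin k → ℝ), (0 : Fin n → ℝ)) ∈ C)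
    (hproj : Prod.snd '' C = Set.univ)
    (x : Fin m → (Fin k → ℝ) × (Fin n → ℝ)) (hx : ∀ j, x j ∈ C)
    (J : Fin p → Finset (Fin m)) (hJ : ∀ i, (J i).card = n)
    (Cfam : Fin p → Set ((Fin k → ℝ) × (Fin n → ℝ)))
    (hCfam : ∀ i, Cfam i = coneHull
      ((Set.range fun a : Fin k => ((Pi.single a 1 : Fin k → ℝ), (0 : Fin n → ℝ)))
        ∪ (x '' ↑(J i))))
    (Dfam : Fin p → Set (Fin n → ℝ))
    (hDfam : ∀ i, Dfam i = coneHull ((fun j => (x j).2) '' ↑(J i)))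
    (hCunion : C = ⋃ i, Cfam i)
    (hDdecomp : IsSectorDecomposition Set.univ Dfam) :
    IsSectorDecomposition C Cfam ∧
    (∀ i, coneDim (Cfam i) = k + n) ∧
    (∀ i, Prod.snd '' Cfam i = Dfam i) ∧
    (∀ i l, i ≠ l → Prod.snd '' (Cfam i ∩ Cfam l) = Dfam i ∩ Dfam l) := by
  classical
  haveI : Nonempty (Fin k) := ⟨⟨0, hk⟩⟩
  set π : ((Fin k → ℝ) × (Fin n → ℝ)) →ₗ[ℝ] (Fin n → ℝ) :=
    LinearMap.snd ℝ (Fin k → ℝ) (Fin n → ℝ) with hπdef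
  have hπ : ∀ z : (Fin k → ℝ) × (Fin n → ℝ), π z = z.2 := fun _ => rfl
  have hfr : Module.finrank ℝ ((Fin k → ℝ) × (Fin n → ℝ)) = k + n := by
    rw [Module.finrank_prod, Module.finrank_fin_fun, Module.finrank_fin_fun]
  obtain ⟨S₀, hS₀⟩ := hcone
  -- each Cfam i ⊆ C
  have hsubC : ∀ i, Cfam i ⊆ C := by
    intro i
    rw [hCfam i, hS₀]
    refine ConeAux.coneHull_min ?_
    rw [← hS₀]
    rintro z (⟨a, rfl⟩ | ⟨j, _, rfl⟩)
    · exact he a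
    · exact hx j
  -- projections of Cfam
  have hB : ∀ i, Prod.snd '' Cfam i = Dfam i := by
    intro i
    have h1 : Prod.snd '' Cfam i = π '' Cfam i := rfl
    rw [h1, hCfam i, ConeAux.image_coneHull, Set.image_union]
    have h2 : π '' (Set.range fun a : Fin k =>
        ((Pi.single a 1 : Fin k → ℝ), (0 : Fin n → ℝ))) = {(0 : Fin n → ℝ)} := by
      rw [← Set.range_comp]
      exact Set.range_const
    have h3 : π '' (x '' ↑(J i)) = (fun j => (x j).2) '' ↑(J i) := by
      rw [← Set.image_comp]; rfl
    rw [h2, h3, ConeAux.coneHull_zero_union, hDfam i]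
  -- spans of Dfam are everything
  have hDtop : ∀ i, Submodule.span ℝ (Dfam i) = ⊤ := by
    intro i
    apply Submodule.eq_top_of_finrank_eq
    have := (hDdecomp.2.1 i).2.2
    rw [coneDim] at this
    rw [this]
  -- spans of Cfam are everything
  have hCtop : ∀ i, Submodule.span ℝ (Cfam i) = ⊤ := by
    intro i
    have hker : ∀ v : Fin k → ℝ,
        ((v, 0) : (Fin k → ℝ) × (Fin n → ℝ)) ∈ Submodule.span ℝ (Cfam i) := by
      intro v
      rw [← ConeAux.sum_single v]
      refine Submodule.sum_mem _ fun a _ => Submodule.smul_mem _ _ (Submodule.subset_span ?_)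
      rw [hCfam i]
      exact ConeAux.subset_coneHull _ (Or.inl ⟨a, rfl⟩)
    have hmap : Submodule.map π (Submodule.span ℝ (Cfam i)) = ⊤ := by
      rw [← Submodule.span_image]
      have : π '' Cfam i = Dfam i := hB i
      rw [this, hDtop i]
    rw [eq_top_iff]
    rintro z -
    have hz : π z ∈ Submodule.map π (Submodule.span ℝ (Cfam i)) := by
      rw [hmap]; trivial
    obtain ⟨w, hw, hwz⟩ := hz
    have hzz : z = ((z.1 - w.1, 0) : (Fin k → ℝ) × (Fin n → ℝ)) + w := by
      have : w.2 = z.2 := hwz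
      ext j
      · simp
      · simp [this]
    rw [hzz]
    exact Submodule.add_mem _ (hker _) hw
  -- dimension of Cfam
  have hdim : ∀ i, coneDim (Cfam i) = k + n := by
    intro i
    rw [coneDim, hCtop i, finrank_top, hfr]
  -- finite generating sets for Cfam
  have hT : ∀ i, ∃ T : Finset ((Fin k → ℝ) × (Fin n → ℝ)),
      (T : Set _) = (Set.range fun a : Fin k =>
        ((Pi.single a 1 : Fin k → ℝ), (0 : Fin n → ℝ))) ∪ (x '' ↑(J i)) ∧
      T.card ≤ k + n := by
    intro i
    refine ⟨(Finset.univ.image fun a : Fin k =>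
        ((Pi.single a 1 : Fin k → ℝ), (0 : Fin n → ℝ))) ∪ (J i).image x, ?_, ?_⟩
    · simp [Finset.coe_union, Finset.coe_image, Set.image_univ]
    · calc _ ≤ _ := Finset.card_union_le _ _
        _ ≤ k + n := by
          gcongr
          · exact (Finset.card_image_le).trans (by simp)
          · exact (Finset.card_image_le).trans (le_of_eq (hJ i))
  have hConeC : ∀ i, IsCone (Cfam i) := by
    intro i
    obtain ⟨T, hTc, _⟩ := hT i
    exact ⟨T, by rw [hCfam i, hTc]⟩
  -- rank
  have hrank : ∀ i, coneRank (Cfam i) = coneDim (Cfam i) := by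
    intro i
    obtain ⟨T, hTc, hTcard⟩ := hT i
    have hle : coneRank (Cfam i) ≤ k + n := by
      refine le_trans (Nat.sInf_le ⟨T, rfl, by rw [hCfam i, hTc]⟩) hTcard
    have hne : { r : ℕ | ∃ S : Finset ((Fin k → ℝ) × (Fin n → ℝ)),
        S.card = r ∧ Cfam i = coneHull (S : Set _) }.Nonempty :=
      ⟨T.card, T, rfl, by rw [hCfam i, hTc]⟩
    have hmem := Nat.sInf_mem hne
    obtain ⟨S, hScard, hSgen⟩ := hmem
    have hge : k + n ≤ coneRank (Cfam i) := by
      have h1 : coneDim (Cfam i) ≤ S.card := by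
        rw [coneDim, hSgen, ConeAux.span_coneHull]
        exact finrank_span_finset_le_card S
      rw [hdim i] at h1
      rw [coneRank, ← hScard] at *
      exact h1
    rw [hdim i]
    exact le_antisymm hle hge
  -- projection of intersections
  have hcap : ∀ i l, Prod.snd '' (Cfam i ∩ Cfam l) = Dfam i ∩ Dfam l := by
    intro i l
    refine le_antisymm ?_ ?_
    · refine le_trans (Set.image_inter_subset _ _ _) ?_
      rw [hB i, hB l]
    · rintro y ⟨hyi, hyl⟩
      rw [← hB i] at hyi
      rw [← hB l] at hyl
      obtain ⟨zi, hzi, hziy⟩ := hyi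
      obtain ⟨zl, hzl, hzly⟩ := hyl
      have hpos : ∀ z ∈ C, ∀ a, (0:ℝ) ≤ z.1 a := fun z hz a => hsub hz a
      have hbase : ∀ (i' : Fin p) (v : Fin k → ℝ), (∀ a, 0 ≤ v a) →
          ((v, 0) : (Fin k → ℝ) × (Fin n → ℝ)) ∈ Cfam i' := by
        intro i' v hv
        rw [hCfam i']
        exact ⟨k, v, fun a => ((Pi.single a 1 : Fin k → ℝ), (0 : Fin n → ℝ)), hv,
          fun a => Or.inl ⟨a, rfl⟩, (ConeAux.sum_single v).symm⟩
      refine ⟨(zi.1 + zl.1, y), ⟨?_, ?_⟩, rfl⟩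
      · have : ((zi.1 + zl.1, y) : (Fin k → ℝ) × (Fin n → ℝ)) = zi + (zl.1, 0) := by
          ext j <;> simp [← hziy]
        rw [this, hCfam i]
        rw [hCfam i] at hzi
        exact ConeAux.add_mem_coneHull hzi (by
          rw [← hCfam i]
          exact hbase i zl.1 (hpos zl (hsubC l hzl)))
      · have : ((zi.1 + zl.1, y) : (Fin k → ℝ) × (Fin n → ℝ)) = zl + (zi.1, 0) := by
          ext j
          · simp [add_comm]
          · simp [← hzly]
        rw [this, hCfam l]
        rw [hCfam l] at hzl
        exact ConeAux.add_mem_coneHull hzl (by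
          rw [← hCfam l]
          exact hbase l zi.1 (hpos zi (hsubC i hzi)))
  -- empty interiors
  have hint : ∀ i j, i ≠ j → interior (Cfam i ∩ Cfam j) = ∅ := by
    intro i j hij
    by_contra h
    obtain ⟨z, hz⟩ := Set.nonempty_iff_ne_empty.2 h
    have hopen : IsOpen (Prod.snd '' interior (Cfam i ∩ Cfam j)) :=
      isOpenMap_snd _ isOpen_interior
    have hsub2 : Prod.snd '' interior (Cfam i ∩ Cfam j) ⊆ Dfam i ∩ Dfam j := by
      rw [← hcap i j]
      exact Set.image_mono interior_subset
    have : z.2 ∈ interior (Dfam i ∩ Dfam j) :=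
      (hopen.subset_interior_iff.2 hsub2) ⟨z, hz, rfl⟩
    rw [hDdecomp.2.2.2 i j hij] at this
    exact this
  refine ⟨⟨hsubC, fun i => ⟨⟨hConeC i, hrank i⟩, ⟨hConeC i, by rw [hdim i, hfr]⟩⟩,
      hCunion, hint⟩, hdim, hB, fun i l _ => hcap i l⟩
end
end

section
/- Let M ⊆ ℝ^k be a finitely generated additive submonoid (there is a finite subset of M every whose ℕ-linear combinations exhaust M). Suppose M = M_1 ∪ ⋯ ∪ M_p where each M_i ⊆ M is a finitely generated additive submonoid. Then the conic hull of M equals the union of the conic hulls of the M_i: cone(M) = cone(M_1) ∪ ⋯ ∪ cone(M_p). -/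
noncomputable section

section ConeHullLemmas

variable {V : Type*} [AddCommGroup V] [Module ℝ V]

lemma mem_coneHull_fintype {ι : Type} [Fintype ι] {S : Set V} (c : ι → ℝ) (v : ι → V)
    (hc : ∀ i, 0 ≤ c i) (hv : ∀ i, v i ∈ S) : ∑ i, c i • v i ∈ coneHull S := by
  classical
  obtain ⟨e⟩ : Nonempty (ι ≃ Fin (Fintype.card ι)) := ⟨Fintype.equivFin ι⟩
  refine ⟨Fintype.card ι, c ∘ e.symm, v ∘ e.symm, fun i => hc _, fun i => hv _, ?_⟩
  exact Fintype.sum_equiv e (fun i => c i • v i)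
    (fun j => (c ∘ e.symm) j • (v ∘ e.symm) j) (fun i => by simp)

lemma subset_coneHull (S : Set V) : S ⊆ coneHull S := by
  intro x hx
  have := mem_coneHull_fintype (ι := Unit) (fun _ => (1:ℝ)) (fun _ => x) (fun _ => zero_le_one)
    (fun _ => hx)
  simpa using this

lemma coneHull_mono {S S' : Set V} (h : S ⊆ S') : coneHull S ⊆ coneHull S' := by
  rintro x ⟨n, c, v, hc, hv, rfl⟩
  exact ⟨n, c, v, hc, fun i => h (hv i), rfl⟩

lemma zero_mem_coneHull (S : Set V) : (0:V) ∈ coneHull S :=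
  ⟨0, fun i => 0, fun i => 0, fun i => le_refl _, fun i => i.elim0, by simp⟩

lemma smul_mem_coneHull {S : Set V} {r : ℝ} (hr : 0 ≤ r) {x : V} (hx : x ∈ coneHull S) :
    r • x ∈ coneHull S := by
  obtain ⟨n, c, v, hc, hv, rfl⟩ := hx
  refine ⟨n, fun i => r * c i, v, fun i => mul_nonneg hr (hc i), hv, ?_⟩
  simp [Finset.smul_sum, mul_smul]

lemma add_mem_coneHull {S : Set V} {x y : V} (hx : x ∈ coneHull S) (hy : y ∈ coneHull S) :
    x + y ∈ coneHull S := by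
  classical
  obtain ⟨n, c, v, hc, hv, rfl⟩ := hx
  obtain ⟨m, d, w, hd, hw, rfl⟩ := hy
  have := mem_coneHull_fintype (ι := Fin n ⊕ Fin m) (S := S) (Sum.elim c d) (Sum.elim v w)
    (fun i => by cases i <;> simp [hc, hd]) (fun i => by cases i <;> simp [hv, hw])
  simpa [Fintype.sum_sum_type] using this

lemma coneHull_subset {S S' : Set V} (h : S ⊆ coneHull S') : coneHull S ⊆ coneHull S' := by
  rintro x ⟨n, c, v, hc, hv, rfl⟩
  classical
  choose m d w hd hw hsum using fun i => h (hv i)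
  have := mem_coneHull_fintype (ι := Σ i : Fin n, Fin (m i))
    (fun p => c p.1 * d p.1 p.2) (fun p => w p.1 p.2)
    (fun p => mul_nonneg (hc p.1) (hd p.1 p.2)) (fun p => hw p.1 p.2)
  have he : ∑ p : Σ i : Fin n, Fin (m i), (c p.1 * d p.1 p.2) • w p.1 p.2
      = ∑ i, c i • v i := by
    rw [← Finset.univ_sigma_univ, Finset.sum_sigma]
    refine Finset.sum_congr rfl fun i _ => ?_
    rw [hsum i, Finset.smul_sum]
    exact Finset.sum_congr rfl fun j _ => by rw [mul_smul]
  rwa [he] at this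

lemma coneHull_closure_fg (T : Finset V) :
    coneHull ((AddSubmonoid.closure (↑T : Set V) : AddSubmonoid V) : Set V)
      = coneHull (↑T : Set V) := by
  refine subset_antisymm (coneHull_subset ?_) (coneHull_mono AddSubmonoid.subset_closure)
  intro x hx
  refine AddSubmonoid.closure_induction (fun y hy => subset_coneHull _ hy)
    (zero_mem_coneHull _) (fun a b _ _ ha hb => add_mem_coneHull ha hb) hx

lemma cone_caratheodory (n : ℕ) (c : Fin n → ℝ) (v : Fin n → V) (hc : ∀ i, 0 ≤ c i) :
    ∃ (m : ℕ) (d : Fin m → ℝ) (w : Fin m → V), (∀ i, 0 ≤ d i) ∧ (∀ i, w i ∈ Set.range v) ∧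
      LinearIndependent ℝ w ∧ ∑ i, c i • v i = ∑ i, d i • w i := by
  classical
  induction n with
  | zero =>
      exact ⟨0, c, v, hc, fun i => i.elim0, linearIndependent_empty_type, rfl⟩
  | succ n ih =>
      by_cases hli : LinearIndependent ℝ v
      · exact ⟨n + 1, c, v, hc, fun i => ⟨i, rfl⟩, hli, rfl⟩
      have hg : ∃ g : Fin (n+1) → ℝ, ∑ i, g i • v i = 0 ∧ ∃ i, 0 < g i := by
        obtain ⟨g, hgs, i, hgi⟩ := Fintype.not_linearIndependent_iff.1 hli
        rcases Ne.lt_or_gt hgi with h | h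
        · exact ⟨-g, by simpa using hgs, i, by simpa using h⟩
        · exact ⟨g, hgs, i, h⟩
      obtain ⟨g, hgs, i0, hi0⟩ := hg
      have hne : (Finset.univ.filter fun j => 0 < g j).Nonempty :=
        ⟨i0, by simp [hi0]⟩
      obtain ⟨j0, hj0mem, hj0min⟩ := Finset.exists_min_image _ (fun j => c j / g j) hne
      have hgj0 : 0 < g j0 := (Finset.mem_filter.1 hj0mem).2
      set r : ℝ := c j0 / g j0 with hr
      have hr0 : 0 ≤ r := div_nonneg (hc j0) hgj0.le
      set c' : Fin (n+1) → ℝ := fun j => c j - r * g j with hc'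
      have hc'0 : ∀ j, 0 ≤ c' j := by
        intro j
        rcases le_or_gt (g j) 0 with h | h
        · have : r * g j ≤ 0 := mul_nonpos_of_nonneg_of_nonpos hr0 h
          simp only [hc']
          linarith [hc j]
        · have hrle : r ≤ c j / g j := hj0min j (Finset.mem_filter.2 ⟨Finset.mem_univ _, h⟩)
          have h2 : r * g j ≤ c j := by
            rw [← le_div_iff₀ h]
            exact hrle
          simp only [hc']
          linarith
      have hc'j0 : c' j0 = 0 := by
        simp only [hc', hr]
        field_simp
        simp
      have hsum' : ∑ j, c' j • v j = ∑ j, c j • v j := by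
        simp only [hc', sub_smul, mul_smul, Finset.sum_sub_distrib]
        rw [← Finset.smul_sum, hgs, smul_zero, sub_zero]
      obtain ⟨m, d, w, hd, hw, hwli, hws⟩ :=
        ih (c' ∘ j0.succAbove) (v ∘ j0.succAbove) (fun i => hc'0 _)
      refine ⟨m, d, w, hd, fun i => ?_, hwli, ?_⟩
      · obtain ⟨j, hj⟩ := hw i
        exact ⟨j0.succAbove j, hj⟩
      · rw [← hsum', Fin.sum_univ_succAbove (fun j => c' j • v j) j0, hc'j0, zero_smul,
          zero_add]
        exact hws

end ConeHullLemmas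

section ClosednessLemmas

lemma isClosed_indep_cone {k : ℕ} {ι : Type} [Fintype ι] (w : ι → (Fin k → ℝ))
    (hw : LinearIndependent ℝ w) :
    IsClosed ((fun c : ι → ℝ => ∑ i, c i • w i) '' {c | ∀ i, 0 ≤ c i}) := by
  classical
  set φ : (ι → ℝ) →ₗ[ℝ] (Fin k → ℝ) := Fintype.linearCombination ℝ w with hφ
  have hφa : ∀ c, φ c = ∑ i, c i • w i := fun c => rfl
  have hinj : Function.Injective φ := by
    rw [← LinearMap.ker_eq_bot, Submodule.eq_bot_iff]
    intro c hcmem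
    have h0 : ∑ i, c i • w i = 0 := by rw [← hφa]; exact hcmem
    funext i
    exact Fintype.linearIndependent_iff.1 hw c h0 i
  have hce := LinearMap.isClosedEmbedding_of_injective (f := φ) (by rwa [LinearMap.ker_eq_bot])
  have hcl : IsClosed {c : ι → ℝ | ∀ i, 0 ≤ c i} := by
    have : {c : ι → ℝ | ∀ i, 0 ≤ c i} = Set.univ.pi fun _ => Set.Ici (0:ℝ) := by
      ext c; simp [Set.mem_pi, Pi.le_def]
    rw [this]
    exact isClosed_set_pi fun a _ => isClosed_Ici
  exact hce.isClosedMap _ hcl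

lemma isClosed_coneHull_finset {k : ℕ} (T : Finset (Fin k → ℝ)) :
    IsClosed (coneHull (↑T : Set (Fin k → ℝ))) := by
  classical
  set D : Finset (Fin k → ℝ) → Set (Fin k → ℝ) := fun s =>
    if h : LinearIndependent ℝ (fun i : {x // x ∈ s} => (i : Fin k → ℝ)) then
      (fun c : {x // x ∈ s} → ℝ => ∑ i, c i • (i : Fin k → ℝ)) '' {c | ∀ i, 0 ≤ c i}
    else ∅ with hD
  have hDcl : ∀ s, IsClosed (D s) := by
    intro s
    rw [hD]
    dsimp only
    split
    · exact isClosed_indep_cone _ (by assumption)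
    · exact isClosed_empty
  have hmain : coneHull (↑T : Set (Fin k → ℝ))
      = ⋃ s ∈ (↑T.powerset : Set (Finset (Fin k → ℝ))), D s := by
    apply subset_antisymm
    · rintro x ⟨n, c, v, hc, hv, rfl⟩
      obtain ⟨m, d, w, hd, hwr, hwli, hsum⟩ := cone_caratheodory n c v hc
      set s : Finset (Fin k → ℝ) := Finset.image w Finset.univ with hs
      have hsT : s ∈ T.powerset := by
        rw [Finset.mem_powerset]
        intro y hy
        obtain ⟨j, _, rfl⟩ := Finset.mem_image.1 hy
        obtain ⟨i, hi⟩ := hwr j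
        rw [← hi]
        exact hv i
      have hf : Function.Bijective (fun j : Fin m => (⟨w j, by
          simp [hs, Finset.mem_image]⟩ : {x // x ∈ s})) := by
        constructor
        · intro a b hab
          exact hwli.injective (congrArg Subtype.val hab)
        · rintro ⟨y, hy⟩
          obtain ⟨j, _, rfl⟩ := Finset.mem_image.1 hy
          exact ⟨j, rfl⟩
      set e : Fin m ≃ {x // x ∈ s} := Equiv.ofBijective _ hf with he
      have hecoe : ∀ j, ((e j : {x // x ∈ s}) : Fin k → ℝ) = w j := fun j => rfl
      have hindep : LinearIndependent ℝ (fun i : {x // x ∈ s} => (i : Fin k → ℝ)) := by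
        rw [← linearIndependent_equiv e]
        exact hwli
      refine Set.mem_biUnion hsT ?_
      rw [hD]
      dsimp only
      rw [dif_pos hindep]
      refine ⟨fun i => d (e.symm i), fun i => hd _, ?_⟩
      rw [hsum]
      exact (Fintype.sum_equiv e (fun j => d j • w j)
        (fun i => d (e.symm i) • (i : Fin k → ℝ)) (by intro j; simp [hecoe])).symm ▸ rfl
    · intro x hx
      obtain ⟨s, hs, hxs⟩ := Set.mem_iUnion₂.1 hx
      rw [hD] at hxs
      dsimp only at hxs
      split at hxs
      · obtain ⟨c, hc, rfl⟩ := hxs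
        refine mem_coneHull_fintype c _ hc fun i => ?_
        exact (Finset.mem_powerset.1 hs) i.2
      · exact absurd hxs (Set.notMem_empty x)
  rw [hmain]
  exact Set.Finite.isClosed_biUnion (T.powerset.finite_toSet) fun s _ => hDcl s

lemma rat_comb_mem {k p : ℕ} (M : AddSubmonoid (Fin k → ℝ)) (Mi : Fin p → AddSubmonoid (Fin k → ℝ))
    (hunion : (M : Set (Fin k → ℝ)) = ⋃ i, (Mi i : Set (Fin k → ℝ)))
    (n : ℕ) (q : Fin n → ℚ) (hq : ∀ i, 0 ≤ q i) (v : Fin n → (Fin k → ℝ))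
    (hv : ∀ i, v i ∈ M) :
    ∑ i, ((q i : ℝ)) • v i ∈ ⋃ j, coneHull ((Mi j : Set (Fin k → ℝ))) := by
  classical
  set N : ℕ := ∏ i, (q i).den with hN
  have hNpos : 0 < N := Finset.prod_pos fun i _ => (q i).pos
  set a : Fin n → ℕ := fun i => (N / (q i).den) * (q i).num.toNat with ha
  have hkey : ∀ i, ((a i : ℚ)) = (N : ℚ) * q i := by
    intro i
    have hd : (q i).den ∣ N := Finset.dvd_prod_of_mem _ (Finset.mem_univ i)
    have hden : ((q i).den : ℚ) ≠ 0 := by exact_mod_cast (q i).den_nz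
    have hnum : ((q i).num.toNat : ℚ) = ((q i).num : ℚ) := by
      exact_mod_cast congrArg (Int.cast : ℤ → ℚ) (Int.toNat_of_nonneg (Rat.num_nonneg.2 (hq i)))
    rw [ha]
    push_cast [Nat.cast_div hd hden]
    rw [hnum]
    rw [div_mul_eq_mul_div, mul_div_assoc, Rat.num_div_den]
  have hz : (N : ℝ) • (∑ i, ((q i : ℝ)) • v i) = ∑ i, (a i : ℝ) • v i := by
    rw [Finset.smul_sum]
    refine Finset.sum_congr rfl fun i _ => ?_
    rw [smul_smul]
    congr 1
    have h2 : ((a i : ℚ) : ℝ) = (((N : ℚ) * q i : ℚ) : ℝ) :=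
      congrArg (fun x : ℚ => (x : ℝ)) (hkey i)
    push_cast at h2 ⊢
    linarith
  have hzM : ∑ i, (a i : ℝ) • v i ∈ M := by
    apply AddSubmonoid.sum_mem
    intro i _
    rw [Nat.cast_smul_eq_nsmul]
    exact AddSubmonoid.nsmul_mem M (hv i) (a i)
  have hzU : ∑ i, (a i : ℝ) • v i ∈ ⋃ j, ((Mi j : Set (Fin k → ℝ))) := by
    rw [← hunion]; exact hzM
  obtain ⟨j, hj⟩ := Set.mem_iUnion.1 hzU
  have hNne : (N : ℝ) ≠ 0 := by exact_mod_cast hNpos.ne'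
  have hx : ∑ i, ((q i : ℝ)) • v i = ((N : ℝ)⁻¹) • ∑ i, (a i : ℝ) • v i := by
    rw [← hz, smul_smul, inv_mul_cancel₀ hNne, one_smul]
  rw [hx]
  exact Set.mem_iUnion.2 ⟨j, smul_mem_coneHull (by positivity) (subset_coneHull _ hj)⟩

end ClosednessLemmas

/-- If a finitely generated additive submonoid `M ⊆ ℝ^k` is the union of
finitely generated submonoids `M_1,…,M_p ⊆ M`, then the conic hull of `M` equals the union
of the conic hulls of the `M_i`. -/
theorem stmt_5 (k p : ℕ) (M : AddSubmonoid (Fin k → ℝ))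
    (Mi : Fin p → AddSubmonoid (Fin k → ℝ))
    (hM : M.FG) (hMi : ∀ i, (Mi i).FG) (hle : ∀ i, Mi i ≤ M)
    (hunion : (M : Set (Fin k → ℝ)) = ⋃ i, (Mi i : Set (Fin k → ℝ))) :
    coneHull (M : Set (Fin k → ℝ)) = ⋃ i, coneHull ((Mi i : Set (Fin k → ℝ))) := by
  apply subset_antisymm
  · rintro x ⟨n, c, v, hc, hv, rfl⟩
    have hUcl : IsClosed (⋃ j, coneHull ((Mi j : Set (Fin k → ℝ)))) := by
      apply isClosed_iUnion_of_finite
      intro j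
      obtain ⟨T, hT⟩ := hMi j
      rw [← hT, coneHull_closure_fg]
      exact isClosed_coneHull_finset T
    rw [← hUcl.closure_eq]
    have hex : ∀ (m : ℕ) (i : Fin n), ∃ qq : ℚ, c i < qq ∧ (qq : ℝ) < c i + 1/(m+1) := by
      intro m i
      apply exists_rat_btwn
      have h1 : (0:ℝ) < 1/(m+1) := by positivity
      linarith
    choose q hq1 hq2 using hex
    have hy : ∀ m, ∑ i, ((q m i : ℝ)) • v i ∈ ⋃ j, coneHull ((Mi j : Set (Fin k → ℝ))) := by
      intro m
      refine rat_comb_mem M Mi hunion n (q m) (fun i => ?_) v hv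
      have : (0:ℝ) ≤ (q m i : ℝ) := (hc i).trans (hq1 m i).le
      exact_mod_cast this
    refine mem_closure_of_tendsto (b := (Filter.atTop : Filter ℕ)) ?_ (Filter.Eventually.of_forall hy)
    apply tendsto_finset_sum
    intro i _
    have upper : Filter.Tendsto (fun m : ℕ => c i + 1/((m:ℝ)+1)) Filter.atTop (nhds (c i)) := by
      have h0 := tendsto_one_div_add_atTop_nhds_zero_nat (𝕜 := ℝ)
      have h1 : Filter.Tendsto (fun _ : ℕ => c i) Filter.atTop (nhds (c i)) := tendsto_const_nhds
      simpa using h1.add h0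
    have hti : Filter.Tendsto (fun m : ℕ => ((q m i : ℝ))) Filter.atTop (nhds (c i)) :=
      tendsto_of_tendsto_of_tendsto_of_le_of_le tendsto_const_nhds upper
        (fun m => (hq1 m i).le) (fun m => (hq2 m i).le)
    exact hti.smul_const (v i)
  · apply Set.iUnion_subset
    intro j
    exact coneHull_mono (fun x hx => hle j hx)
end
end

section
/- Let w = (0,1,0,1,0,1,−1) ∈ ℝ^7 and let C be the conic hull of the 8 vectors {e_1, e_2, e_3, e_4, e_5, e_6, e_7, w}, where e_1,…,e_7 is the standard basis of ℝ^7. Then the rank of C is 8: there exists no set S ⊆ ℝ^7 of cardinality at most 7 whose conic hull equals C. -/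
noncomputable section

/-- The special vector `w = (0,1,0,1,0,1,−1) ∈ ℝ^7`. -/
def wVec : Fin 7 → ℝ := ![0, 1, 0, 1, 0, 1, -1]

/-- The cone generated by the 7 standard basis vectors of `ℝ^7` together with `w`. -/
def triangleCone : Set (Fin 7 → ℝ) :=
  coneHull ((Set.range fun i : Fin 7 => (Pi.single i 1 : Fin 7 → ℝ)) ∪ {wVec})

namespace Aux6

variable {V : Type*} [AddCommGroup V] [Module ℝ V]

lemma mem_coneHull_self {S : Set V} {x : V} (hx : x ∈ S) : x ∈ coneHull S :=
  ⟨1, fun _ => 1, fun _ => x, fun _ => zero_le_one, fun _ => hx, by simp⟩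

lemma nonneg_on_hull (f : V →ₗ[ℝ] ℝ) {S : Set V} (h : ∀ s ∈ S, 0 ≤ f s)
    {x : V} (hx : x ∈ coneHull S) : 0 ≤ f x := by
  obtain ⟨n, c, v, hc, hv, rfl⟩ := hx
  rw [map_sum]
  exact Finset.sum_nonneg fun i _ => by
    rw [map_smul, smul_eq_mul]; exact mul_nonneg (hc i) (h _ (hv i))

lemma exists_scaled_mem (S : Finset V) (r : V) (hr0 : r ≠ 0)
    (hrS : r ∈ coneHull (S : Set V)) (P : V → Prop) (hPS : ∀ s ∈ S, P s)
    {m : ℕ} (f : Fin m → (V →ₗ[ℝ] ℝ))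
    (hfP : ∀ v, P v → ∀ j, 0 ≤ f j v) (hfr : ∀ j, f j r = 0)
    (hray : ∀ v, P v → (∀ j, f j v = 0) → ∃ t : ℝ, 0 ≤ t ∧ v = t • r) :
    ∃ s ∈ S, ∃ t : ℝ, 0 < t ∧ s = t • r := by
  obtain ⟨n, c, v, hc, hv, hsum⟩ := hrS
  have hex : ∃ i, c i • v i ≠ 0 := by
    by_contra h
    push_neg at h
    exact hr0 (by rw [hsum]; exact Finset.sum_eq_zero fun i _ => h i)
  obtain ⟨i, hi⟩ := hex
  have hci : c i ≠ 0 := fun h => hi (by simp [h])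
  have hvi0 : v i ≠ 0 := fun h => hi (by simp [h])
  have hzero : ∀ j, f j (v i) = 0 := by
    intro j
    have hsum0 : ∑ i', c i' * f j (v i') = 0 := by
      have h1 := hfr j
      rw [hsum, map_sum] at h1
      simpa [smul_eq_mul] using h1
    have hnn : ∀ i' ∈ Finset.univ, 0 ≤ c i' * f j (v i') :=
      fun i' _ => mul_nonneg (hc i') (hfP _ (hPS _ (hv i')) j)
    have h2 := (Finset.sum_eq_zero_iff_of_nonneg hnn).mp hsum0 i (Finset.mem_univ i)
    rcases mul_eq_zero.mp h2 with h | h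
    · exact absurd h hci
    · exact h
  obtain ⟨t, ht0, htv⟩ := hray (v i) (hPS _ (hv i)) hzero
  have htne : t ≠ 0 := fun h => hvi0 (by simp [htv, h])
  exact ⟨v i, hv i, t, lt_of_le_of_ne ht0 (Ne.symm htne), htv⟩

abbrev pr (i : Fin 7) : (Fin 7 → ℝ) →ₗ[ℝ] ℝ := LinearMap.proj i

def Pc (x : Fin 7 → ℝ) : Prop :=
  0 ≤ x 0 ∧ 0 ≤ x 1 ∧ 0 ≤ x 2 ∧ 0 ≤ x 3 ∧ 0 ≤ x 4 ∧ 0 ≤ x 5 ∧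
  0 ≤ x 1 + x 6 ∧ 0 ≤ x 3 + x 6 ∧ 0 ≤ x 5 + x 6

lemma single_nonneg (i c : Fin 7) : (0:ℝ) ≤ (Pi.single i (1:ℝ) : Fin 7 → ℝ) c := by
  rcases eq_or_ne c i with h | h
  · subst h; simp
  · simp [Pi.single_eq_of_ne h]

lemma gen_nonneg (f : (Fin 7 → ℝ) →ₗ[ℝ] ℝ) (h1 : ∀ i, 0 ≤ f (Pi.single i 1))
    (h2 : 0 ≤ f wVec) :
    ∀ s ∈ (Set.range fun i : Fin 7 => (Pi.single i 1 : Fin 7 → ℝ)) ∪ {wVec}, 0 ≤ f s := by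
  rintro s (⟨i, rfl⟩ | rfl)
  · exact h1 i
  · exact h2

lemma constraints : ∀ x ∈ triangleCone, Pc x := by
  intro x hx
  refine ⟨?_, ?_, ?_, ?_, ?_, ?_, ?_, ?_, ?_⟩
  · exact nonneg_on_hull (pr 0) (gen_nonneg _ (fun i => single_nonneg i 0)
      (by show (0:ℝ) ≤ wVec 0; norm_num [show wVec 0 = 0 from rfl])) hx
  · exact nonneg_on_hull (pr 1) (gen_nonneg _ (fun i => single_nonneg i 1)
      (by show (0:ℝ) ≤ wVec 1; norm_num [show wVec 1 = 1 from rfl])) hx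
  · exact nonneg_on_hull (pr 2) (gen_nonneg _ (fun i => single_nonneg i 2)
      (by show (0:ℝ) ≤ wVec 2; norm_num [show wVec 2 = 0 from rfl])) hx
  · exact nonneg_on_hull (pr 3) (gen_nonneg _ (fun i => single_nonneg i 3)
      (by show (0:ℝ) ≤ wVec 3; norm_num [show wVec 3 = 1 from rfl])) hx
  · exact nonneg_on_hull (pr 4) (gen_nonneg _ (fun i => single_nonneg i 4)
      (by show (0:ℝ) ≤ wVec 4; norm_num [show wVec 4 = 0 from rfl])) hx
  · exact nonneg_on_hull (pr 5) (gen_nonneg _ (fun i => single_nonneg i 5)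
      (by show (0:ℝ) ≤ wVec 5; norm_num [show wVec 5 = 1 from rfl])) hx
  · exact nonneg_on_hull (pr 1 + pr 6) (gen_nonneg _
      (fun i => add_nonneg (single_nonneg i 1) (single_nonneg i 6))
      (by show (0:ℝ) ≤ wVec 1 + wVec 6
          norm_num [show wVec 1 = 1 from rfl, show wVec 6 = -1 from rfl])) hx
  · exact nonneg_on_hull (pr 3 + pr 6) (gen_nonneg _
      (fun i => add_nonneg (single_nonneg i 3) (single_nonneg i 6))
      (by show (0:ℝ) ≤ wVec 3 + wVec 6
          norm_num [show wVec 3 = 1 from rfl, show wVec 6 = -1 from rfl])) hx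
  · exact nonneg_on_hull (pr 5 + pr 6) (gen_nonneg _
      (fun i => add_nonneg (single_nonneg i 5) (single_nonneg i 6))
      (by show (0:ℝ) ≤ wVec 5 + wVec 6
          norm_num [show wVec 5 = 1 from rfl, show wVec 6 = -1 from rfl])) hx

lemma eq_smul_single (v : Fin 7 → ℝ) (i : Fin 7) (h : ∀ j, j ≠ i → v j = 0) :
    v = v i • (Pi.single i 1 : Fin 7 → ℝ) := by
  funext j
  rcases eq_or_ne j i with hj | hj
  · subst hj; simp
  · simp [Pi.single_eq_of_ne hj, h j hj]

end Aux6

namespace Aux6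

def rays : Fin 8 → (Fin 7 → ℝ) :=
  ![Pi.single 0 1, Pi.single 1 1, Pi.single 2 1, Pi.single 3 1,
    Pi.single 4 1, Pi.single 5 1, Pi.single 6 1, wVec]

lemma rays_inj : ∀ k k' : Fin 8, ∀ t t' : ℝ, 0 < t → 0 < t' → t • rays k = t' • rays k' → k = k' := by
  intro k k' t t' ht ht' h
  fin_cases k <;> fin_cases k'
  · rfl
  · exfalso; have e : t * (1 : ℝ) = t' * (0 : ℝ) := congrFun h (0 : Fin 7); nlinarith
  · exfalso; have e : t * (1 : ℝ) = t' * (0 : ℝ) := congrFun h (0 : Fin 7); nlinarith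
  · exfalso; have e : t * (1 : ℝ) = t' * (0 : ℝ) := congrFun h (0 : Fin 7); nlinarith
  · exfalso; have e : t * (1 : ℝ) = t' * (0 : ℝ) := congrFun h (0 : Fin 7); nlinarith
  · exfalso; have e : t * (1 : ℝ) = t' * (0 : ℝ) := congrFun h (0 : Fin 7); nlinarith
  · exfalso; have e : t * (1 : ℝ) = t' * (0 : ℝ) := congrFun h (0 : Fin 7); nlinarith
  · exfalso; have e : t * (1 : ℝ) = t' * (0 : ℝ) := congrFun h (0 : Fin 7); nlinarith
  · exfalso; have e : t * (1 : ℝ) = t' * (0 : ℝ) := congrFun h (1 : Fin 7); nlinarith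
  · rfl
  · exfalso; have e : t * (1 : ℝ) = t' * (0 : ℝ) := congrFun h (1 : Fin 7); nlinarith
  · exfalso; have e : t * (1 : ℝ) = t' * (0 : ℝ) := congrFun h (1 : Fin 7); nlinarith
  · exfalso; have e : t * (1 : ℝ) = t' * (0 : ℝ) := congrFun h (1 : Fin 7); nlinarith
  · exfalso; have e : t * (1 : ℝ) = t' * (0 : ℝ) := congrFun h (1 : Fin 7); nlinarith
  · exfalso; have e : t * (1 : ℝ) = t' * (0 : ℝ) := congrFun h (1 : Fin 7); nlinarith
  · exfalso; have e : t * (0 : ℝ) = t' * (-1 : ℝ) := congrFun h (6 : Fin 7); nlinarith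
  · exfalso; have e : t * (1 : ℝ) = t' * (0 : ℝ) := congrFun h (2 : Fin 7); nlinarith
  · exfalso; have e : t * (1 : ℝ) = t' * (0 : ℝ) := congrFun h (2 : Fin 7); nlinarith
  · rfl
  · exfalso; have e : t * (1 : ℝ) = t' * (0 : ℝ) := congrFun h (2 : Fin 7); nlinarith
  · exfalso; have e : t * (1 : ℝ) = t' * (0 : ℝ) := congrFun h (2 : Fin 7); nlinarith
  · exfalso; have e : t * (1 : ℝ) = t' * (0 : ℝ) := congrFun h (2 : Fin 7); nlinarith
  · exfalso; have e : t * (1 : ℝ) = t' * (0 : ℝ) := congrFun h (2 : Fin 7); nlinarith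
  · exfalso; have e : t * (1 : ℝ) = t' * (0 : ℝ) := congrFun h (2 : Fin 7); nlinarith
  · exfalso; have e : t * (1 : ℝ) = t' * (0 : ℝ) := congrFun h (3 : Fin 7); nlinarith
  · exfalso; have e : t * (1 : ℝ) = t' * (0 : ℝ) := congrFun h (3 : Fin 7); nlinarith
  · exfalso; have e : t * (1 : ℝ) = t' * (0 : ℝ) := congrFun h (3 : Fin 7); nlinarith
  · rfl
  · exfalso; have e : t * (1 : ℝ) = t' * (0 : ℝ) := congrFun h (3 : Fin 7); nlinarith
  · exfalso; have e : t * (1 : ℝ) = t' * (0 : ℝ) := congrFun h (3 : Fin 7); nlinarith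
  · exfalso; have e : t * (1 : ℝ) = t' * (0 : ℝ) := congrFun h (3 : Fin 7); nlinarith
  · exfalso; have e : t * (0 : ℝ) = t' * (-1 : ℝ) := congrFun h (6 : Fin 7); nlinarith
  · exfalso; have e : t * (1 : ℝ) = t' * (0 : ℝ) := congrFun h (4 : Fin 7); nlinarith
  · exfalso; have e : t * (1 : ℝ) = t' * (0 : ℝ) := congrFun h (4 : Fin 7); nlinarith
  · exfalso; have e : t * (1 : ℝ) = t' * (0 : ℝ) := congrFun h (4 : Fin 7); nlinarith
  · exfalso; have e : t * (1 : ℝ) = t' * (0 : ℝ) := congrFun h (4 : Fin 7); nlinarith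
  · rfl
  · exfalso; have e : t * (1 : ℝ) = t' * (0 : ℝ) := congrFun h (4 : Fin 7); nlinarith
  · exfalso; have e : t * (1 : ℝ) = t' * (0 : ℝ) := congrFun h (4 : Fin 7); nlinarith
  · exfalso; have e : t * (1 : ℝ) = t' * (0 : ℝ) := congrFun h (4 : Fin 7); nlinarith
  · exfalso; have e : t * (1 : ℝ) = t' * (0 : ℝ) := congrFun h (5 : Fin 7); nlinarith
  · exfalso; have e : t * (1 : ℝ) = t' * (0 : ℝ) := congrFun h (5 : Fin 7); nlinarith
  · exfalso; have e : t * (1 : ℝ) = t' * (0 : ℝ) := congrFun h (5 : Fin 7); nlinarith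
  · exfalso; have e : t * (1 : ℝ) = t' * (0 : ℝ) := congrFun h (5 : Fin 7); nlinarith
  · exfalso; have e : t * (1 : ℝ) = t' * (0 : ℝ) := congrFun h (5 : Fin 7); nlinarith
  · rfl
  · exfalso; have e : t * (1 : ℝ) = t' * (0 : ℝ) := congrFun h (5 : Fin 7); nlinarith
  · exfalso; have e : t * (0 : ℝ) = t' * (-1 : ℝ) := congrFun h (6 : Fin 7); nlinarith
  · exfalso; have e : t * (1 : ℝ) = t' * (0 : ℝ) := congrFun h (6 : Fin 7); nlinarith
  · exfalso; have e : t * (1 : ℝ) = t' * (0 : ℝ) := congrFun h (6 : Fin 7); nlinarith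
  · exfalso; have e : t * (1 : ℝ) = t' * (0 : ℝ) := congrFun h (6 : Fin 7); nlinarith
  · exfalso; have e : t * (1 : ℝ) = t' * (0 : ℝ) := congrFun h (6 : Fin 7); nlinarith
  · exfalso; have e : t * (1 : ℝ) = t' * (0 : ℝ) := congrFun h (6 : Fin 7); nlinarith
  · exfalso; have e : t * (1 : ℝ) = t' * (0 : ℝ) := congrFun h (6 : Fin 7); nlinarith
  · rfl
  · exfalso; have e : t * (1 : ℝ) = t' * (-1 : ℝ) := congrFun h (6 : Fin 7); nlinarith
  · exfalso; have e : t * (0 : ℝ) = t' * (1 : ℝ) := congrFun h (0 : Fin 7); nlinarith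
  · exfalso; have e : t * (-1 : ℝ) = t' * (0 : ℝ) := congrFun h (6 : Fin 7); nlinarith
  · exfalso; have e : t * (0 : ℝ) = t' * (1 : ℝ) := congrFun h (2 : Fin 7); nlinarith
  · exfalso; have e : t * (-1 : ℝ) = t' * (0 : ℝ) := congrFun h (6 : Fin 7); nlinarith
  · exfalso; have e : t * (0 : ℝ) = t' * (1 : ℝ) := congrFun h (4 : Fin 7); nlinarith
  · exfalso; have e : t * (-1 : ℝ) = t' * (0 : ℝ) := congrFun h (6 : Fin 7); nlinarith
  · exfalso; have e : t * (-1 : ℝ) = t' * (1 : ℝ) := congrFun h (6 : Fin 7); nlinarith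
  · rfl

lemma ray_lemma (S : Finset (Fin 7 → ℝ)) (hEq : coneHull (S : Set (Fin 7 → ℝ)) = triangleCone) :
    ∀ k : Fin 8, ∃ s ∈ S, ∃ t : ℝ, 0 < t ∧ s = t • rays k := by
  have hPS : ∀ s ∈ S, Pc s := fun s hs => constraints s (hEq ▸ mem_coneHull_self hs)
  intro k
  fin_cases k
  · show ∃ s ∈ S, ∃ t : ℝ, 0 < t ∧ s = t • (Pi.single (0:Fin 7) 1 : Fin 7 → ℝ)
    refine exists_scaled_mem S _ ?_ ?_ Pc hPS ![pr 1, pr 2, pr 3, pr 4, pr 5, pr 1 + pr 6] ?_ ?_ ?_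
    · intro hz; simpa using congrFun hz (0 : Fin 7)
    · rw [hEq]; exact mem_coneHull_self (Set.mem_union_left _ ⟨0, rfl⟩)
    · intro v hv j
      obtain ⟨c0, c1, c2, c3, c4, c5, c16, c36, c56⟩ := hv
      fin_cases j
      · exact c1
      · exact c2
      · exact c3
      · exact c4
      · exact c5
      · exact c16
    · intro j; fin_cases j
      · rfl
      · rfl
      · rfl
      · rfl
      · rfl
      · show (0:ℝ) + 0 = 0; norm_num
    · intro v hv hz
      obtain ⟨c0, c1, c2, c3, c4, c5, c16, c36, c56⟩ := hv
      have z1 : v 1 = 0 := hz 0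
      have z2 : v 2 = 0 := hz 1
      have z3 : v 3 = 0 := hz 2
      have z4 : v 4 = 0 := hz 3
      have z5 : v 5 = 0 := hz 4
      have zj : v 1 + v 6 = 0 := hz 5
      have z6 : v 6 = 0 := by linarith
      refine ⟨v 0, c0, eq_smul_single v 0 ?_⟩
      intro j hj; fin_cases j
      · exact absurd rfl hj
      · exact z1
      · exact z2
      · exact z3
      · exact z4
      · exact z5
      · exact z6
  · show ∃ s ∈ S, ∃ t : ℝ, 0 < t ∧ s = t • (Pi.single (1:Fin 7) 1 : Fin 7 → ℝ)
    refine exists_scaled_mem S _ ?_ ?_ Pc hPS ![pr 0, pr 2, pr 3, pr 4, pr 5, pr 3 + pr 6] ?_ ?_ ?_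
    · intro hz; simpa using congrFun hz (1 : Fin 7)
    · rw [hEq]; exact mem_coneHull_self (Set.mem_union_left _ ⟨1, rfl⟩)
    · intro v hv j
      obtain ⟨c0, c1, c2, c3, c4, c5, c16, c36, c56⟩ := hv
      fin_cases j
      · exact c0
      · exact c2
      · exact c3
      · exact c4
      · exact c5
      · exact c36
    · intro j; fin_cases j
      · rfl
      · rfl
      · rfl
      · rfl
      · rfl
      · show (0:ℝ) + 0 = 0; norm_num
    · intro v hv hz
      obtain ⟨c0, c1, c2, c3, c4, c5, c16, c36, c56⟩ := hv
      have z0 : v 0 = 0 := hz 0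
      have z2 : v 2 = 0 := hz 1
      have z3 : v 3 = 0 := hz 2
      have z4 : v 4 = 0 := hz 3
      have z5 : v 5 = 0 := hz 4
      have zj : v 3 + v 6 = 0 := hz 5
      have z6 : v 6 = 0 := by linarith
      refine ⟨v 1, c1, eq_smul_single v 1 ?_⟩
      intro j hj; fin_cases j
      · exact z0
      · exact absurd rfl hj
      · exact z2
      · exact z3
      · exact z4
      · exact z5
      · exact z6
  · show ∃ s ∈ S, ∃ t : ℝ, 0 < t ∧ s = t • (Pi.single (2:Fin 7) 1 : Fin 7 → ℝ)
    refine exists_scaled_mem S _ ?_ ?_ Pc hPS ![pr 0, pr 1, pr 3, pr 4, pr 5, pr 1 + pr 6] ?_ ?_ ?_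
    · intro hz; simpa using congrFun hz (2 : Fin 7)
    · rw [hEq]; exact mem_coneHull_self (Set.mem_union_left _ ⟨2, rfl⟩)
    · intro v hv j
      obtain ⟨c0, c1, c2, c3, c4, c5, c16, c36, c56⟩ := hv
      fin_cases j
      · exact c0
      · exact c1
      · exact c3
      · exact c4
      · exact c5
      · exact c16
    · intro j; fin_cases j
      · rfl
      · rfl
      · rfl
      · rfl
      · rfl
      · show (0:ℝ) + 0 = 0; norm_num
    · intro v hv hz
      obtain ⟨c0, c1, c2, c3, c4, c5, c16, c36, c56⟩ := hv
      have z0 : v 0 = 0 := hz 0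
      have z1 : v 1 = 0 := hz 1
      have z3 : v 3 = 0 := hz 2
      have z4 : v 4 = 0 := hz 3
      have z5 : v 5 = 0 := hz 4
      have zj : v 1 + v 6 = 0 := hz 5
      have z6 : v 6 = 0 := by linarith
      refine ⟨v 2, c2, eq_smul_single v 2 ?_⟩
      intro j hj; fin_cases j
      · exact z0
      · exact z1
      · exact absurd rfl hj
      · exact z3
      · exact z4
      · exact z5
      · exact z6
  · show ∃ s ∈ S, ∃ t : ℝ, 0 < t ∧ s = t • (Pi.single (3:Fin 7) 1 : Fin 7 → ℝ)
    refine exists_scaled_mem S _ ?_ ?_ Pc hPS ![pr 0, pr 1, pr 2, pr 4, pr 5, pr 1 + pr 6] ?_ ?_ ?_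
    · intro hz; simpa using congrFun hz (3 : Fin 7)
    · rw [hEq]; exact mem_coneHull_self (Set.mem_union_left _ ⟨3, rfl⟩)
    · intro v hv j
      obtain ⟨c0, c1, c2, c3, c4, c5, c16, c36, c56⟩ := hv
      fin_cases j
      · exact c0
      · exact c1
      · exact c2
      · exact c4
      · exact c5
      · exact c16
    · intro j; fin_cases j
      · rfl
      · rfl
      · rfl
      · rfl
      · rfl
      · show (0:ℝ) + 0 = 0; norm_num
    · intro v hv hz
      obtain ⟨c0, c1, c2, c3, c4, c5, c16, c36, c56⟩ := hv
      have z0 : v 0 = 0 := hz 0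
      have z1 : v 1 = 0 := hz 1
      have z2 : v 2 = 0 := hz 2
      have z4 : v 4 = 0 := hz 3
      have z5 : v 5 = 0 := hz 4
      have zj : v 1 + v 6 = 0 := hz 5
      have z6 : v 6 = 0 := by linarith
      refine ⟨v 3, c3, eq_smul_single v 3 ?_⟩
      intro j hj; fin_cases j
      · exact z0
      · exact z1
      · exact z2
      · exact absurd rfl hj
      · exact z4
      · exact z5
      · exact z6
  · show ∃ s ∈ S, ∃ t : ℝ, 0 < t ∧ s = t • (Pi.single (4:Fin 7) 1 : Fin 7 → ℝ)
    refine exists_scaled_mem S _ ?_ ?_ Pc hPS ![pr 0, pr 1, pr 2, pr 3, pr 5, pr 1 + pr 6] ?_ ?_ ?_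
    · intro hz; simpa using congrFun hz (4 : Fin 7)
    · rw [hEq]; exact mem_coneHull_self (Set.mem_union_left _ ⟨4, rfl⟩)
    · intro v hv j
      obtain ⟨c0, c1, c2, c3, c4, c5, c16, c36, c56⟩ := hv
      fin_cases j
      · exact c0
      · exact c1
      · exact c2
      · exact c3
      · exact c5
      · exact c16
    · intro j; fin_cases j
      · rfl
      · rfl
      · rfl
      · rfl
      · rfl
      · show (0:ℝ) + 0 = 0; norm_num
    · intro v hv hz
      obtain ⟨c0, c1, c2, c3, c4, c5, c16, c36, c56⟩ := hv
      have z0 : v 0 = 0 := hz 0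
      have z1 : v 1 = 0 := hz 1
      have z2 : v 2 = 0 := hz 2
      have z3 : v 3 = 0 := hz 3
      have z5 : v 5 = 0 := hz 4
      have zj : v 1 + v 6 = 0 := hz 5
      have z6 : v 6 = 0 := by linarith
      refine ⟨v 4, c4, eq_smul_single v 4 ?_⟩
      intro j hj; fin_cases j
      · exact z0
      · exact z1
      · exact z2
      · exact z3
      · exact absurd rfl hj
      · exact z5
      · exact z6
  · show ∃ s ∈ S, ∃ t : ℝ, 0 < t ∧ s = t • (Pi.single (5:Fin 7) 1 : Fin 7 → ℝ)
    refine exists_scaled_mem S _ ?_ ?_ Pc hPS ![pr 0, pr 1, pr 2, pr 3, pr 4, pr 1 + pr 6] ?_ ?_ ?_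
    · intro hz; simpa using congrFun hz (5 : Fin 7)
    · rw [hEq]; exact mem_coneHull_self (Set.mem_union_left _ ⟨5, rfl⟩)
    · intro v hv j
      obtain ⟨c0, c1, c2, c3, c4, c5, c16, c36, c56⟩ := hv
      fin_cases j
      · exact c0
      · exact c1
      · exact c2
      · exact c3
      · exact c4
      · exact c16
    · intro j; fin_cases j
      · rfl
      · rfl
      · rfl
      · rfl
      · rfl
      · show (0:ℝ) + 0 = 0; norm_num
    · intro v hv hz
      obtain ⟨c0, c1, c2, c3, c4, c5, c16, c36, c56⟩ := hv
      have z0 : v 0 = 0 := hz 0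
      have z1 : v 1 = 0 := hz 1
      have z2 : v 2 = 0 := hz 2
      have z3 : v 3 = 0 := hz 3
      have z4 : v 4 = 0 := hz 4
      have zj : v 1 + v 6 = 0 := hz 5
      have z6 : v 6 = 0 := by linarith
      refine ⟨v 5, c5, eq_smul_single v 5 ?_⟩
      intro j hj; fin_cases j
      · exact z0
      · exact z1
      · exact z2
      · exact z3
      · exact z4
      · exact absurd rfl hj
      · exact z6
  · show ∃ s ∈ S, ∃ t : ℝ, 0 < t ∧ s = t • (Pi.single (6:Fin 7) 1 : Fin 7 → ℝ)
    refine exists_scaled_mem S _ ?_ ?_ Pc hPS ![pr 0, pr 1, pr 2, pr 3, pr 4, pr 5] ?_ ?_ ?_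
    · intro hz; simpa using congrFun hz (6 : Fin 7)
    · rw [hEq]; exact mem_coneHull_self (Set.mem_union_left _ ⟨6, rfl⟩)
    · intro v hv j
      obtain ⟨c0, c1, c2, c3, c4, c5, c16, c36, c56⟩ := hv
      fin_cases j
      · exact c0
      · exact c1
      · exact c2
      · exact c3
      · exact c4
      · exact c5
    · intro j; fin_cases j <;> rfl
    · intro v hv hz
      obtain ⟨c0, c1, c2, c3, c4, c5, c16, c36, c56⟩ := hv
      have z0 : v 0 = 0 := hz 0
      have z1 : v 1 = 0 := hz 1
      have z2 : v 2 = 0 := hz 2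
      have z3 : v 3 = 0 := hz 3
      have z4 : v 4 = 0 := hz 4
      have z5 : v 5 = 0 := hz 5
      have h6 : 0 ≤ v 6 := by linarith
      refine ⟨v 6, h6, eq_smul_single v 6 ?_⟩
      intro j hj; fin_cases j
      · exact z0
      · exact z1
      · exact z2
      · exact z3
      · exact z4
      · exact z5
      · exact absurd rfl hj
  · show ∃ s ∈ S, ∃ t : ℝ, 0 < t ∧ s = t • wVec
    refine exists_scaled_mem S _ ?_ ?_ Pc hPS ![pr 0, pr 2, pr 4, pr 1 + pr 6, pr 3 + pr 6, pr 5 + pr 6] ?_ ?_ ?_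
    · intro hz; simpa [show wVec 1 = 1 from rfl] using congrFun hz (1 : Fin 7)
    · rw [hEq]; exact mem_coneHull_self (Set.mem_union_right _ rfl)
    · intro v hv j
      obtain ⟨c0, c1, c2, c3, c4, c5, c16, c36, c56⟩ := hv
      fin_cases j
      · exact c0
      · exact c2
      · exact c4
      · exact c16
      · exact c36
      · exact c56
    · intro j; fin_cases j
      · rfl
      · rfl
      · rfl
      · show (1:ℝ) + -1 = 0; norm_num
      · show (1:ℝ) + -1 = 0; norm_num
      · show (1:ℝ) + -1 = 0; norm_num
    · intro v hv hz
      obtain ⟨c0, c1, c2, c3, c4, c5, c16, c36, c56⟩ := hv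
      have z0 : v 0 = 0 := hz 0
      have z2 : v 2 = 0 := hz 1
      have z4 : v 4 = 0 := hz 2
      have z16 : v 1 + v 6 = 0 := hz 3
      have z36 : v 3 + v 6 = 0 := hz 4
      have z56 : v 5 + v 6 = 0 := hz 5
      refine ⟨v 1, c1, ?_⟩
      funext j; fin_cases j
      · show v 0 = v 1 * 0; rw [mul_zero]; exact z0
      · show v 1 = v 1 * 1; rw [mul_one]
      · show v 2 = v 1 * 0; rw [mul_zero]; exact z2
      · show v 3 = v 1 * 1; rw [mul_one]; linarith
      · show v 4 = v 1 * 0; rw [mul_zero]; exact z4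
      · show v 5 = v 1 * 1; rw [mul_one]; linarith
      · show v 6 = v 1 * (-1); linarith

end Aux6


namespace Aux6

lemma single_inj : Function.Injective (fun i : Fin 7 => (Pi.single i (1:ℝ) : Fin 7 → ℝ)) := by
  intro a b hab
  by_contra hne
  simpa [Pi.single_apply, hne] using congrFun hab a

def gens : Finset (Fin 7 → ℝ) :=
  insert wVec (Finset.univ.image fun i : Fin 7 => (Pi.single i 1 : Fin 7 → ℝ))

lemma wVec_notMem :
    wVec ∉ (Finset.univ.image fun i : Fin 7 => (Pi.single i 1 : Fin 7 → ℝ)) := by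
  intro h
  simp only [Finset.mem_image, Finset.mem_univ, true_and] at h
  obtain ⟨i, hi⟩ := h
  have h6 := congrFun hi 6
  rw [show wVec 6 = -1 from rfl] at h6
  rcases eq_or_ne (6 : Fin 7) i with h | h
  · subst h; rw [Pi.single_eq_same] at h6; norm_num at h6
  · rw [Pi.single_eq_of_ne h] at h6; norm_num at h6

lemma card_gens : gens.card = 8 := by
  rw [gens, Finset.card_insert_of_notMem wVec_notMem,
    Finset.card_image_of_injective _ single_inj, Finset.card_univ, Fintype.card_fin]

lemma coe_gens : (gens : Set (Fin 7 → ℝ)) =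
    (Set.range fun i : Fin 7 => (Pi.single i 1 : Fin 7 → ℝ)) ∪ {wVec} := by
  simp only [gens, Finset.coe_insert, Finset.coe_image, Finset.coe_univ, Set.image_univ,
    Set.union_singleton]

lemma triangleCone_eq : triangleCone = coneHull (gens : Set (Fin 7 → ℝ)) := by
  rw [coe_gens]; rfl

lemma no_small (S : Finset (Fin 7 → ℝ)) (h7 : S.card ≤ 7)
    (hEq : coneHull (S : Set (Fin 7 → ℝ)) = triangleCone) : False := by
  choose s hsS t ht hst using ray_lemma S hEq
  have hinj : Function.Injective s := by
    intro a b hab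
    exact rays_inj a b (t a) (t b) (ht a) (ht b) (by rw [← hst a, hab, hst b])
  have hle := Finset.card_le_card_of_injOn (s := Finset.univ) s (fun a _ => hsS a) hinj.injOn
  rw [Finset.card_univ, Fintype.card_fin] at hle
  omega

end Aux6


/-- The rank of the cone `C = coneHull{e_1,…,e_7,w}` is `8`: there is no set
`S ⊆ ℝ^7` of cardinality at most `7` whose conic hull is `C`. -/
theorem stmt_6 :
    coneRank triangleCone = 8 ∧
    ¬ ∃ S : Finset (Fin 7 → ℝ), S.card ≤ 7 ∧ coneHull (S : Set (Fin 7 → ℝ)) = triangleCone := by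
  have h8 : 8 ∈ { r : ℕ | ∃ S : Finset (Fin 7 → ℝ), S.card = r ∧
      triangleCone = coneHull (S : Set (Fin 7 → ℝ)) } :=
    ⟨Aux6.gens, Aux6.card_gens, Aux6.triangleCone_eq⟩
  constructor
  · refine le_antisymm (Nat.sInf_le h8) (le_csInf ⟨8, h8⟩ ?_)
    rintro m ⟨S, rfl, hC⟩
    by_contra h
    push_neg at h
    exact Aux6.no_small S (by omega) hC.symm
  · rintro ⟨S, h7, hC⟩
    exact Aux6.no_small S h7 hC
end
end

section
/- Let C ⊆ ℝ^12 = ℝ^8 × ℝ^4 be the conic hull of the 22 vectors v_1,…,v_22 listed in the context, and for i = 1,…,42 let C_i be the conic hull of {v_1,…,v_8} ∪ {v_{8+j} : j ∈ J_i}, with the index sets J_i as in the context. Then {C_1,…,C_42} is a sector decomposition of C: each C_i has linear span equal to ℝ^12 and is generated by 12 vectors (hence is a full sector of dimension and rank 12); C = C_1 ∪ ⋯ ∪ C_42; and for all distinct i, ℓ the intersection C_i ∩ C_ℓ has empty interior in ℝ^12. -/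
noncomputable section

/-- The 22 Hilbert basis vectors `v_1,…,v_22` of the (model of the) completed
Knutson-Tao-Goncharov-Shen cone of the triangulated ideal square, in `ℝ^12 = ℝ^8 × ℝ^4`. -/
def vS : Fin 22 → Fin 12 → ℝ :=
  ![![1, 0, 0, 0, 0, 0, 0, 0, 0, 0, 0, 0],
    ![0, 1, 0, 0, 0, 0, 0, 0, 0, 0, 0, 0],
    ![0, 0, 1, 0, 0, 0, 0, 0, 0, 0, 0, 0],
    ![0, 0, 0, 1, 0, 0, 0, 0, 0, 0, 0, 0],
    ![0, 0, 0, 0, 1, 0, 0, 0, 0, 0, 0, 0],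
    ![0, 0, 0, 0, 0, 1, 0, 0, 0, 0, 0, 0],
    ![0, 0, 0, 0, 0, 0, 1, 0, 0, 0, 0, 0],
    ![0, 0, 0, 0, 0, 0, 0, 1, 0, 0, 0, 0],
    ![0, 0, 0, 0, 0, 0, 0, 0, 1, -1, 0, 0],
    ![0, 0, 0, 0, 0, 0, 0, 0, 1, 0, 0, 0],
    ![0, 1, 0, 1, 0, 1, 0, 0, -1, 0, 0, 0],
    ![0, 1, 0, 1, 0, 1, 0, 0, -1, 0, 0, 1],
    ![0, 0, 0, 1, 0, 0, 0, 0, 0, 0, 1, 0],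
    ![0, 0, 0, 0, 0, 1, 0, 1, 0, 0, -1, 0],
    ![0, 0, 1, 0, 0, 0, 0, 1, 0, 1, -1, 0],
    ![0, 0, 0, 0, 1, 0, 0, 0, 0, 0, 1, -1],
    ![0, 0, 0, 0, 0, 0, 0, 1, 1, 0, -1, 0],
    ![0, 1, 0, 1, 0, 1, 0, 0, -1, 0, 1, 0],
    ![0, 0, 0, 1, 0, 0, 0, 0, 0, 0, 0, 1],
    ![0, 0, 1, 0, 0, 0, 0, 0, 0, 1, 0, 0],
    ![0, 0, 0, 0, 1, 0, 0, 0, 0, 0, 0, -1],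
    ![0, 0, 0, 0, 0, 1, 0, 0, 0, -1, 0, 0]]

/-- The 14 tropical 𝒳-coordinate vectors `u_1,…,u_14 ∈ ℝ^4`, indexed 1-based
(the entry at index `0` is a dummy and is never used). -/
def uS : Fin 15 → Fin 4 → ℝ :=
  ![![0, 0, 0, 0],
    ![1, -1, 0, 0],
    ![1, 0, 0, 0],
    ![-1, 0, 0, 0],
    ![-1, 0, 0, 1],
    ![0, 0, 1, 0],
    ![0, 0, -1, 0],
    ![0, 1, -1, 0],
    ![0, 0, 1, -1],
    ![1, 0, -1, 0],
    ![-1, 0, 1, 0],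
    ![0, 0, 0, 1],
    ![0, 1, 0, 0],
    ![0, 0, 0, -1],
    ![0, -1, 0, 0]]

/-- The 42 index sets `J_1,…,J_42 ⊆ {1,…,14}`, each of cardinality 4. -/
def JS : Fin 42 → Finset (Fin 15) :=
  ![{3, 8, 13, 12}, {2, 8, 13, 12}, {3, 12, 7, 13}, {2, 12, 7, 13},
    {10, 3, 8, 12}, {5, 10, 4, 12}, {3, 14, 10, 8}, {10, 14, 5, 4},
    {1, 14, 6, 11}, {4, 14, 6, 11}, {1, 14, 5, 11}, {4, 14, 5, 11},
    {9, 1, 6, 11}, {2, 7, 9, 11}, {9, 1, 6, 13}, {2, 7, 9, 13},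
    {1, 2, 13, 8}, {3, 7, 6, 13}, {3, 14, 6, 4}, {1, 14, 5, 8},
    {1, 14, 8, 13}, {1, 14, 6, 13}, {3, 14, 8, 13}, {3, 14, 6, 13},
    {2, 1, 5, 11}, {4, 7, 6, 11}, {3, 12, 7, 4}, {2, 12, 5, 8},
    {5, 12, 11, 2}, {7, 12, 11, 2}, {4, 12, 5, 11}, {4, 12, 7, 11},
    {1, 2, 5, 8}, {3, 7, 6, 4}, {10, 3, 4, 12}, {10, 12, 5, 8},
    {3, 14, 10, 4}, {10, 14, 5, 8}, {2, 1, 9, 11}, {9, 7, 6, 11},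
    {2, 1, 9, 13}, {7, 9, 6, 13}]

/-- The first 8 Hilbert basis vectors (the corner-arc vectors == first 8 standard basis
vectors of `ℝ^12`). -/
def eSet : Set (Fin 12 → ℝ) :=
  Set.range fun a : Fin 8 => vS (Fin.castLE (by norm_num) a)

/-- The last 14 Hilbert basis vectors `v_9,…,v_22`, indexed 1-based over `Fin 15`
(so `wS j = v_{8+j}`; the entry at index `0` is a dummy and is never used). -/
def wS : Fin 15 → Fin 12 → ℝ :=
  ![0, vS 8, vS 9, vS 10, vS 11, vS 12, vS 13, vS 14,
    vS 15, vS 16, vS 17, vS 18, vS 19, vS 20, vS 21]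

/-- The model of the completed KTGS cone of the triangulated square: the conic hull of
all 22 Hilbert basis vectors. -/
def squareCone : Set (Fin 12 → ℝ) := coneHull (Set.range vS)

/-- The sector `C_i ⊆ ℝ^12`: the conic hull of `{v_1,…,v_8} ∪ {v_{8+j} : j ∈ J_i}`. -/
def CS (i : Fin 42) : Set (Fin 12 → ℝ) := coneHull (eSet ∪ wS '' ↑(JS i))

namespace KTGS

def vZ : Fin 22 → Fin 12 → ℤ :=
  ![![1, 0, 0, 0, 0, 0, 0, 0, 0, 0, 0, 0],
  ![0, 1, 0, 0, 0, 0, 0, 0, 0, 0, 0, 0],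
  ![0, 0, 1, 0, 0, 0, 0, 0, 0, 0, 0, 0],
  ![0, 0, 0, 1, 0, 0, 0, 0, 0, 0, 0, 0],
  ![0, 0, 0, 0, 1, 0, 0, 0, 0, 0, 0, 0],
  ![0, 0, 0, 0, 0, 1, 0, 0, 0, 0, 0, 0],
  ![0, 0, 0, 0, 0, 0, 1, 0, 0, 0, 0, 0],
  ![0, 0, 0, 0, 0, 0, 0, 1, 0, 0, 0, 0],
  ![0, 0, 0, 0, 0, 0, 0, 0, 1, -1, 0, 0],
  ![0, 0, 0, 0, 0, 0, 0, 0, 1, 0, 0, 0],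
  ![0, 1, 0, 1, 0, 1, 0, 0, -1, 0, 0, 0],
  ![0, 1, 0, 1, 0, 1, 0, 0, -1, 0, 0, 1],
  ![0, 0, 0, 1, 0, 0, 0, 0, 0, 0, 1, 0],
  ![0, 0, 0, 0, 0, 1, 0, 1, 0, 0, -1, 0],
  ![0, 0, 1, 0, 0, 0, 0, 1, 0, 1, -1, 0],
  ![0, 0, 0, 0, 1, 0, 0, 0, 0, 0, 1, -1],
  ![0, 0, 0, 0, 0, 0, 0, 1, 1, 0, -1, 0],
  ![0, 1, 0, 1, 0, 1, 0, 0, -1, 0, 1, 0],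
  ![0, 0, 0, 1, 0, 0, 0, 0, 0, 0, 0, 1],
  ![0, 0, 1, 0, 0, 0, 0, 0, 0, 1, 0, 0],
  ![0, 0, 0, 0, 1, 0, 0, 0, 0, 0, 0, -1],
  ![0, 0, 0, 0, 0, 1, 0, 0, 0, -1, 0, 0]]

def wZ : Fin 15 → Fin 12 → ℤ :=
  ![0, vZ 8, vZ 9, vZ 10, vZ 11, vZ 12, vZ 13, vZ 14, vZ 15, vZ 16, vZ 17, vZ 18, vZ 19, vZ 20, vZ 21]

def jT : Fin 42 → Fin 4 → Fin 15 :=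
  ![![3, 8, 13, 12],
  ![2, 8, 13, 12],
  ![3, 12, 7, 13],
  ![2, 12, 7, 13],
  ![10, 3, 8, 12],
  ![5, 10, 4, 12],
  ![3, 14, 10, 8],
  ![10, 14, 5, 4],
  ![1, 14, 6, 11],
  ![4, 14, 6, 11],
  ![1, 14, 5, 11],
  ![4, 14, 5, 11],
  ![9, 1, 6, 11],
  ![2, 7, 9, 11],
  ![9, 1, 6, 13],
  ![2, 7, 9, 13],
  ![1, 2, 13, 8],
  ![3, 7, 6, 13],
  ![3, 14, 6, 4],
  ![1, 14, 5, 8],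
  ![1, 14, 8, 13],
  ![1, 14, 6, 13],
  ![3, 14, 8, 13],
  ![3, 14, 6, 13],
  ![2, 1, 5, 11],
  ![4, 7, 6, 11],
  ![3, 12, 7, 4],
  ![2, 12, 5, 8],
  ![5, 12, 11, 2],
  ![7, 12, 11, 2],
  ![4, 12, 5, 11],
  ![4, 12, 7, 11],
  ![1, 2, 5, 8],
  ![3, 7, 6, 4],
  ![10, 3, 4, 12],
  ![10, 12, 5, 8],
  ![3, 14, 10, 4],
  ![10, 14, 5, 8],
  ![2, 1, 9, 11],
  ![9, 7, 6, 11],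
  ![2, 1, 9, 13],
  ![7, 9, 6, 13]]

def NZ : Fin 42 → Fin 4 → Fin 4 → ℤ :=
  ![![![-1, 0, 0, 0],
     ![0, 0, 0, 1],
     ![0, 1, -1, 0],
     ![0, 0, -1, 0]],
    ![![1, 0, 0, 0],
     ![0, 0, 0, 1],
     ![0, 1, -1, 0],
     ![0, 0, -1, 0]],
    ![![-1, 0, 0, 0],
     ![0, 1, 0, 0],
     ![0, 1, -1, 0],
     ![0, 0, 0, -1]],
    ![![1, 0, 0, 0],
     ![0, 1, 0, 0],
     ![0, 1, -1, 0],
     ![0, 0, 0, -1]],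
    ![![0, -1, 0, 0],
     ![0, 0, 0, 1],
     ![1, -1, 0, 0],
     ![1, -1, -1, 0]],
    ![![1, -1, 0, 0],
     ![0, 0, 0, 1],
     ![1, 0, 0, 0],
     ![1, -1, 1, 0]],
    ![![-1, 0, 0, 0],
     ![0, -1, 0, 0],
     ![-1, 0, 1, 0],
     ![-1, 0, 1, -1]],
    ![![-1, 0, 1, 0],
     ![0, -1, 0, 0],
     ![0, 0, 1, 0],
     ![-1, 0, 1, 1]],
    ![![1, -1, 0, 0],
     ![0, -1, 0, 0],
     ![0, 0, -1, 0],
     ![0, 0, 0, 1]],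
    ![![-1, 0, 0, 1],
     ![0, -1, 0, 0],
     ![0, 0, -1, 0],
     ![0, 0, 0, 1]],
    ![![1, -1, 0, 0],
     ![0, -1, 0, 0],
     ![0, 0, 1, 0],
     ![0, 0, 0, 1]],
    ![![-1, 0, 0, 1],
     ![0, -1, 0, 0],
     ![0, 0, 1, 0],
     ![0, 0, 0, 1]],
    ![![1, 0, -1, 0],
     ![1, -1, -1, 0],
     ![0, 0, -1, 0],
     ![0, 0, 0, 1]],
    ![![1, 0, 0, 0],
     ![1, 1, -1, 0],
     ![1, 0, -1, 0],
     ![0, 0, 0, 1]],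
    ![![1, 0, -1, 0],
     ![1, -1, -1, 0],
     ![0, 0, -1, 0],
     ![0, 0, 0, -1]],
    ![![1, 0, 0, 0],
     ![1, 1, -1, 0],
     ![1, 0, -1, 0],
     ![0, 0, 0, -1]],
    ![![0, 1, 0, 0],
     ![-1, 1, 0, 0],
     ![0, 0, -1, 1],
     ![0, 0, -1, 0]],
    ![![-1, 0, 0, 0],
     ![0, 1, -1, 0],
     ![0, 0, -1, 0],
     ![0, 0, 0, -1]],
    ![![-1, 0, 0, 0],
     ![0, -1, 0, 0],
     ![0, 0, -1, 0],
     ![-1, 0, 0, 1]],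
    ![![1, -1, 0, 0],
     ![0, -1, 0, 0],
     ![0, 0, 1, 0],
     ![0, 0, 1, -1]],
    ![![1, -1, 0, 0],
     ![0, -1, 0, 0],
     ![0, 0, 1, -1],
     ![0, 0, 0, -1]],
    ![![1, -1, 0, 0],
     ![0, -1, 0, 0],
     ![0, 0, -1, 0],
     ![0, 0, 0, -1]],
    ![![-1, 0, 0, 0],
     ![0, -1, 0, 0],
     ![0, 0, 1, -1],
     ![0, 0, 0, -1]],
    ![![-1, 0, 0, 0],
     ![0, -1, 0, 0],
     ![0, 0, -1, 0],
     ![0, 0, 0, -1]],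
    ![![1, 0, 0, 0],
     ![1, -1, 0, 0],
     ![0, 0, 1, 0],
     ![0, 0, 0, 1]],
    ![![-1, 0, 0, 1],
     ![0, 1, -1, 0],
     ![0, 0, -1, 0],
     ![0, 0, 0, 1]],
    ![![-1, 0, 0, 0],
     ![0, 1, 0, 0],
     ![0, 1, -1, 0],
     ![-1, 0, 0, 1]],
    ![![1, 0, 0, 0],
     ![0, 1, 0, 0],
     ![0, 0, 1, 0],
     ![0, 0, 1, -1]],
    ![![0, 0, 0, 1],
     ![0, 1, 0, 0],
     ![1, 0, 0, 0],
     ![0, 0, 1, 0]],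
    ![![0, 0, 0, 1],
     ![0, 1, 0, 0],
     ![-1, 1, 0, 0],
     ![0, 0, 1, 0]],
    ![![-1, 0, 0, 1],
     ![0, 1, 0, 0],
     ![0, 0, 1, 0],
     ![0, 0, 0, 1]],
    ![![-1, 0, 0, 1],
     ![0, 1, 0, 0],
     ![0, 1, -1, 0],
     ![0, 0, 0, 1]],
    ![![0, 1, 0, 0],
     ![-1, 1, 0, 0],
     ![0, 0, 1, 0],
     ![0, 0, 1, -1]],
    ![![-1, 0, 0, 0],
     ![0, 1, -1, 0],
     ![0, 0, -1, 0],
     ![-1, 0, 0, 1]],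
    ![![0, -1, 0, 0],
     ![0, 0, 0, 1],
     ![1, -1, 0, 0],
     ![0, -1, 1, 0]],
    ![![-1, 0, 1, 0],
     ![0, 1, 0, 0],
     ![0, 0, 1, 0],
     ![0, 0, 1, -1]],
    ![![-1, 0, 0, 0],
     ![0, -1, 0, 0],
     ![-1, 0, 1, 0],
     ![-1, 0, 0, 1]],
    ![![-1, 0, 1, 0],
     ![0, -1, 0, 0],
     ![0, 0, 1, 0],
     ![0, 0, 1, -1]],
    ![![1, 0, 0, 0],
     ![1, -1, 0, 0],
     ![1, 0, -1, 0],
     ![0, 0, 0, 1]],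
    ![![1, 0, -1, 0],
     ![0, 1, -1, 0],
     ![0, 0, -1, 0],
     ![0, 0, 0, 1]],
    ![![1, 0, 0, 0],
     ![1, -1, 0, 0],
     ![1, 0, -1, 0],
     ![0, 0, 0, -1]],
    ![![0, 1, -1, 0],
     ![1, 0, -1, 0],
     ![0, 0, -1, 0],
     ![0, 0, 0, -1]]]

def PZ : Fin 42 → Fin 4 → ℤ :=
  ![![-2, 4, 1, 0],
  ![3, 4, 1, 0],
  ![-2, 4, 0, 0],
  ![3, 4, 0, 0],
  ![-2, 4, 2, 1],
  ![-1, 4, 3, 3],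
  ![-2, 0, 2, 1],
  ![-1, 0, 3, 3],
  ![1, 0, -2, 4],
  ![0, 0, -2, 4],
  ![1, 0, 3, 4],
  ![0, 0, 3, 4],
  ![2, 1, -2, 4],
  ![3, 3, -1, 4],
  ![2, 1, -2, 0],
  ![3, 3, -1, 0],
  ![3, 2, 1, 0],
  ![-2, 2, -2, 0],
  ![-2, 0, -2, 2],
  ![1, 0, 3, 2],
  ![1, 0, 1, 0],
  ![1, 0, -2, 0],
  ![-2, 0, 1, 0],
  ![-2, 0, -2, 0],
  ![3, 2, 3, 4],
  ![0, 2, -2, 4],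
  ![-2, 4, 0, 2],
  ![3, 4, 3, 2],
  ![3, 4, 3, 4],
  ![3, 4, 0, 4],
  ![0, 4, 3, 4],
  ![0, 4, 0, 4],
  ![3, 2, 3, 2],
  ![-2, 2, -2, 2],
  ![-2, 4, 2, 2],
  ![-1, 4, 3, 2],
  ![-2, 0, 2, 2],
  ![-1, 0, 3, 2],
  ![3, 2, -1, 4],
  ![2, 2, -2, 4],
  ![3, 2, -1, 0],
  ![2, 2, -2, 0]]

def LTab : Fin 42 → Fin 4 → Fin 42 :=
  ![![1, 2, 4, 22],
  ![0, 3, 27, 16],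
  ![3, 17, 0, 26],
  ![2, 15, 1, 29],
  ![0, 35, 34, 6],
  ![34, 30, 35, 7],
  ![37, 4, 22, 36],
  ![11, 5, 36, 37],
  ![9, 12, 10, 21],
  ![8, 25, 11, 18],
  ![11, 24, 8, 19],
  ![10, 30, 9, 7],
  ![8, 39, 38, 14],
  ![39, 38, 29, 15],
  ![21, 41, 40, 12],
  ![41, 40, 3, 13],
  ![1, 20, 32, 40],
  ![41, 23, 2, 33],
  ![9, 33, 36, 23],
  ![37, 32, 20, 10],
  ![22, 16, 21, 19],
  ![23, 14, 20, 8],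
  ![20, 0, 23, 6],
  ![21, 17, 22, 18],
  ![10, 28, 38, 32],
  ![39, 9, 31, 33],
  ![31, 33, 34, 2],
  ![35, 32, 1, 28],
  ![29, 24, 27, 30],
  ![28, 13, 3, 31],
  ![28, 11, 31, 5],
  ![29, 25, 30, 26],
  ![27, 19, 16, 24],
  ![25, 18, 26, 17],
  ![26, 5, 4, 36],
  ![27, 37, 4, 5],
  ![7, 34, 18, 6],
  ![19, 35, 6, 7],
  ![12, 13, 24, 40],
  ![25, 12, 13, 41],
  ![14, 15, 16, 38],
  ![14, 17, 15, 39]]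

def BZ : Fin 42 → Fin 4 → ℤ :=
  ![![5, 1, 1, 4],
  ![5, 1, 2, 2],
  ![5, 2, 1, 2],
  ![5, 1, 1, 4],
  ![1, 1, 1, 4],
  ![1, 1, 1, 4],
  ![1, 4, 1, 1],
  ![1, 4, 1, 1],
  ![1, 1, 5, 4],
  ![1, 2, 5, 2],
  ![1, 2, 5, 2],
  ![1, 4, 5, 1],
  ![1, 1, 1, 4],
  ![1, 1, 1, 4],
  ![1, 1, 1, 4],
  ![1, 1, 1, 4],
  ![2, 2, 2, 2],
  ![4, 2, 2, 2],
  ![2, 2, 4, 2],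
  ![2, 2, 2, 2],
  ![3, 2, 3, 2],
  ![3, 1, 3, 4],
  ![3, 4, 3, 1],
  ![3, 2, 3, 2],
  ![2, 2, 4, 2],
  ![2, 2, 2, 2],
  ![2, 2, 2, 2],
  ![4, 2, 2, 2],
  ![3, 2, 2, 3],
  ![3, 1, 4, 3],
  ![3, 4, 3, 1],
  ![3, 2, 3, 2],
  ![2, 2, 2, 2],
  ![2, 2, 2, 2],
  ![2, 1, 1, 4],
  ![4, 4, 1, 1],
  ![1, 4, 4, 1],
  ![2, 4, 1, 1],
  ![1, 1, 4, 4],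
  ![2, 1, 1, 4],
  ![1, 1, 2, 4],
  ![1, 4, 1, 4]]

def idx8 (s : Fin 4) : Fin 12 := ⟨8 + s.1, by omega⟩

def cLE : Fin 8 → Fin 22 := Fin.castLE (by norm_num)

def c12 : Fin 8 → Fin 12 := Fin.castLE (by norm_num)

def cst8 (a : Fin 8) : Fin 12 := ⟨a.1, by omega⟩

def mZ (i : Fin 42) (k : Fin 22) (a : Fin 12) : ℤ :=
  vZ k a - ∑ r : Fin 4, (∑ s : Fin 4, NZ i s r * vZ k (idx8 s)) * wZ (jT i r) a

def sepD (i l : Fin 42) (j : Fin 15) : ℤ :=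
  ∑ s : Fin 4, (PZ i s - PZ l s) * wZ j (idx8 s)

/-! ### Decidable numeric facts -/

theorem D1 : ∀ (i : Fin 42) (r : Fin 4), jT i r ∈ JS i := by decide

theorem D3 : ∀ (i : Fin 42), ∀ j ∈ JS i, j ≠ 0 := by decide

set_option maxRecDepth 40000 in
set_option maxHeartbeats 1000000 in
theorem D4 : ∀ (i : Fin 42) (s2 s : Fin 4),
    (∑ r : Fin 4, NZ i s2 r * wZ (jT i r) (idx8 s)) = if s2 = s then 1 else 0 := by decide

set_option maxRecDepth 40000 in
set_option maxHeartbeats 1000000 in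
theorem D5 : ∀ (i : Fin 42) (r : Fin 4) (s : Fin 4),
    BZ i r * NZ i s r = PZ i s - PZ (LTab i r) s := by decide

set_option maxRecDepth 40000 in
set_option maxHeartbeats 4000000 in
theorem D6 : ∀ (i : Fin 42) (k : Fin 22) (a : Fin 8), 0 ≤ mZ i k (cst8 a) := by decide

theorem D7 : ∀ (a : Fin 8) (m : Fin 12),
    vZ (cLE a) m = if (a : ℕ) = (m : ℕ) then 1 else 0 := by decide

theorem D8 : ∀ j j' : Fin 15, wZ j = wZ j' → j = j' := by decide

theorem D9 : ∀ i : Fin 42, (JS i).card = 4 := by decide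

theorem D10 : ∀ j : Fin 15, j ≠ 0 → ∀ a : Fin 8,
    wZ j ≠ vZ (cLE a) := by decide

theorem D12 : ∀ (i : Fin 42) (r : Fin 4), 0 < BZ i r := by decide

theorem D13 : ∀ j : Fin 15, j ≠ 0 → ∀ m : Fin 12,
    vZ ⟨j.1 + 7, by omega⟩ m = wZ j m := by decide

set_option maxRecDepth 40000 in
set_option maxHeartbeats 8000000 in
theorem Dsep : ∀ i l : Fin 42, i ≠ l →
    (∀ j ∈ JS i, 0 ≤ sepD i l j) ∧ (∀ j ∈ JS l, sepD i l j ≤ 0) ∧ PZ i ≠ PZ l := by decide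

/-! ### Bridges between the real matrices and the integer matrices -/

set_option maxHeartbeats 2000000 in
theorem hv : ∀ (k : Fin 22) (m : Fin 12), vS k m = ((vZ k m : ℤ) : ℝ) := by
  intro k m; fin_cases k <;> fin_cases m <;> norm_num [vS, vZ]

theorem hw : ∀ (j : Fin 15) (m : Fin 12), wS j m = ((wZ j m : ℤ) : ℝ) := by
  intro j m
  fin_cases j
  · show (0:ℝ) = ((0:ℤ):ℝ)
    norm_num
  all_goals
    norm_num [wS, wZ]
    exact hv _ m

def eR (a : Fin 8) : Fin 12 → ℝ := vS (cLE a)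

theorem eSet_eq : eSet = Set.range eR := rfl

theorem hstd (a : Fin 8) (m : Fin 12) :
    eR a m = if (a : ℕ) = (m : ℕ) then 1 else 0 := by
  rw [eR, hv, D7]; split <;> simp

/-! ### Basic coneHull lemmas -/

variable {S T : Set (Fin 12 → ℝ)}

theorem mem_coneHull {n : ℕ} (c : Fin n → ℝ) (v : Fin n → Fin 12 → ℝ)
    (hc : ∀ i, 0 ≤ c i) (hvS : ∀ i, v i ∈ S) : (∑ i, c i • v i) ∈ coneHull S :=
  ⟨n, c, v, hc, hvS, rfl⟩

theorem coneHull_mono (h : S ⊆ T) : coneHull S ⊆ coneHull T := by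
  rintro x ⟨n, c, v, hc, hvS, rfl⟩
  exact ⟨n, c, v, hc, fun i => h (hvS i), rfl⟩

theorem subset_coneHull : S ⊆ coneHull S := by
  intro x hx
  refine ⟨1, fun _ => 1, fun _ => x, fun _ => zero_le_one, fun _ => hx, ?_⟩
  simp

theorem coneHull_nonneg (φ : (Fin 12 → ℝ) →ₗ[ℝ] ℝ) (hS : ∀ y ∈ S, 0 ≤ φ y) :
    ∀ x ∈ coneHull S, 0 ≤ φ x := by
  rintro x ⟨n, c, v, hc, hvS, rfl⟩
  rw [map_sum]
  refine Finset.sum_nonneg fun i _ => ?_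
  rw [map_smul, smul_eq_mul]
  exact mul_nonneg (hc i) (hS _ (hvS i))

theorem coneHull_nonpos (φ : (Fin 12 → ℝ) →ₗ[ℝ] ℝ) (hS : ∀ y ∈ S, φ y ≤ 0) :
    ∀ x ∈ coneHull S, φ x ≤ 0 := by
  rintro x ⟨n, c, v, hc, hvS, rfl⟩
  rw [map_sum]
  refine Finset.sum_nonpos fun i _ => ?_
  rw [map_smul, smul_eq_mul]
  exact mul_nonpos_of_nonneg_of_nonpos (hc i) (hS _ (hvS i))

theorem span_coneHull (S : Set (Fin 12 → ℝ)) :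
    Submodule.span ℝ (coneHull S) = Submodule.span ℝ S := by
  apply le_antisymm
  · rw [Submodule.span_le]
    rintro x ⟨n, c, v, hc, hvS, rfl⟩
    exact Submodule.sum_mem _ fun i _ =>
      Submodule.smul_mem _ _ (Submodule.subset_span (hvS i))
  · exact Submodule.span_mono subset_coneHull

theorem coneHull_add {x y : Fin 12 → ℝ} (hx : x ∈ coneHull S) (hy : y ∈ coneHull S) :
    x + y ∈ coneHull S := by
  obtain ⟨n, c, v, hc, hvS, rfl⟩ := hx
  obtain ⟨n', c', v', hc', hvS', rfl⟩ := hy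
  refine ⟨n + n', Fin.append c c', Fin.append v v', fun i => ?_, fun i => ?_, ?_⟩
  · induction i using Fin.addCases with
    | left i => simpa [Fin.append_left] using hc i
    | right i => simpa [Fin.append_right] using hc' i
  · induction i using Fin.addCases with
    | left i => simpa [Fin.append_left] using hvS i
    | right i => simpa [Fin.append_right] using hvS' i
  · rw [Fin.sum_univ_add]
    simp [Fin.append_left, Fin.append_right]

theorem coneHull_range {N : ℕ} (f : Fin N → Fin 12 → ℝ) :
    coneHull (Set.range f) =
      {x | ∃ c : Fin N → ℝ, (∀ k, 0 ≤ c k) ∧ x = ∑ k, c k • f k} := by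
  ext x
  constructor
  · rintro ⟨n, c, v, hc, hvS, rfl⟩
    choose κ hκ using hvS
    classical
    refine ⟨fun k => ∑ i ∈ Finset.univ.filter (fun i => κ i = k), c i,
      fun k => Finset.sum_nonneg fun i _ => hc i, ?_⟩
    rw [← Finset.sum_fiberwise Finset.univ κ (fun i => c i • v i)]
    refine Finset.sum_congr rfl fun k _ => ?_
    rw [Finset.sum_smul]
    refine Finset.sum_congr rfl fun i hi => ?_
    rw [Finset.mem_filter] at hi
    rw [← hi.2, hκ]
  · rintro ⟨c, hc, rfl⟩
    exact mem_coneHull c f hc fun k => ⟨k, rfl⟩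

/-! ### Sector membership -/

theorem mem_CS (i : Fin 42) (d : Fin 8 → ℝ) (t : Fin 4 → ℝ)
    (hd : ∀ a, 0 ≤ d a) (ht : ∀ r, 0 ≤ t r) :
    ((∑ a, d a • eR a) + (∑ r, t r • wS (jT i r))) ∈ CS i :=
  coneHull_add
    (mem_coneHull d eR hd fun a => Set.mem_union_left _ ⟨a, rfl⟩)
    (mem_coneHull t (fun r => wS (jT i r)) ht fun r =>
      Set.mem_union_right _ ⟨jT i r, D1 i r, rfl⟩)

/-! ### Coverage -/

theorem cover : squareCone ⊆ ⋃ i, CS i := by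
  intro x hx
  rw [squareCone, coneHull_range] at hx
  obtain ⟨c, hc, hxc⟩ := hx
  have hxm : ∀ m, x m = ∑ k, c k * ((vZ k m : ℤ) : ℝ) := by
    intro m
    rw [hxc, Finset.sum_apply]
    exact Finset.sum_congr rfl fun k _ => by rw [Pi.smul_apply, smul_eq_mul, hv]
  obtain ⟨i, -, hmax⟩ := Finset.exists_max_image Finset.univ
    (fun l => ∑ s, ((PZ l s : ℤ) : ℝ) * x (idx8 s)) ⟨0, Finset.mem_univ 0⟩
  refine Set.mem_iUnion.2 ⟨i, ?_⟩
  set t : Fin 4 → ℝ := fun r => ∑ s, ((NZ i s r : ℤ) : ℝ) * x (idx8 s) with htdef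
  have ht : ∀ r, 0 ≤ t r := by
    intro r
    have hB : (0 : ℝ) < ((BZ i r : ℤ) : ℝ) := by exact_mod_cast D12 i r
    have key : ((BZ i r : ℤ) : ℝ) * t r
        = (∑ s, ((PZ i s : ℤ) : ℝ) * x (idx8 s))
          - ∑ s, ((PZ (LTab i r) s : ℤ) : ℝ) * x (idx8 s) := by
      rw [htdef, Finset.mul_sum, ← Finset.sum_sub_distrib]
      refine Finset.sum_congr rfl fun s _ => ?_
      have h5 : ((BZ i r * NZ i s r : ℤ) : ℝ) = ((PZ i s - PZ (LTab i r) s : ℤ) : ℝ) := by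
        rw [D5]
      push_cast at h5
      linear_combination h5 * x (idx8 s)
    have h0 : 0 ≤ ((BZ i r : ℤ) : ℝ) * t r := by
      rw [key]
      exact sub_nonneg.2 (hmax (LTab i r) (Finset.mem_univ _))
    exact (mul_nonneg_iff_of_pos_left hB).1 h0
  have h1 : ∀ r, t r = ∑ k, c k * ∑ s, ((NZ i s r : ℤ) : ℝ) * ((vZ k (idx8 s) : ℤ) : ℝ) := by
    intro r
    rw [htdef]
    calc ∑ s, ((NZ i s r : ℤ) : ℝ) * x (idx8 s)
        = ∑ s, ∑ k, c k * (((NZ i s r : ℤ) : ℝ) * ((vZ k (idx8 s) : ℤ) : ℝ)) := by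
          refine Finset.sum_congr rfl fun s _ => ?_
          rw [hxm, Finset.mul_sum]
          exact Finset.sum_congr rfl fun k _ => by ring
      _ = ∑ k, ∑ s, c k * (((NZ i s r : ℤ) : ℝ) * ((vZ k (idx8 s) : ℤ) : ℝ)) :=
          Finset.sum_comm
      _ = ∑ k, c k * ∑ s, ((NZ i s r : ℤ) : ℝ) * ((vZ k (idx8 s) : ℤ) : ℝ) := by
          exact Finset.sum_congr rfl fun k _ => (Finset.mul_sum _ _ _).symm
  set d : Fin 8 → ℝ := fun a => x (cst8 a) - ∑ r, t r * wS (jT i r) (cst8 a) with hddef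
  have hd : ∀ a, 0 ≤ d a := by
    intro a
    have hda : d a = ∑ k, c k * ((mZ i k (cst8 a) : ℤ) : ℝ) := by
      show x (cst8 a) - ∑ r, t r * wS (jT i r) (cst8 a)
          = ∑ k, c k * ((mZ i k (cst8 a) : ℤ) : ℝ)
      have h2 : ∑ r, t r * wS (jT i r) (cst8 a)
          = ∑ k, c k * ∑ r, (∑ s, ((NZ i s r : ℤ) : ℝ) * ((vZ k (idx8 s) : ℤ) : ℝ))
              * ((wZ (jT i r) (cst8 a) : ℤ) : ℝ) := by
        calc ∑ r, t r * wS (jT i r) (cst8 a)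
            = ∑ r, ∑ k, c k * ((∑ s, ((NZ i s r : ℤ) : ℝ) * ((vZ k (idx8 s) : ℤ) : ℝ))
                * ((wZ (jT i r) (cst8 a) : ℤ) : ℝ)) := by
              refine Finset.sum_congr rfl fun r _ => ?_
              rw [h1, hw, Finset.sum_mul]
              exact Finset.sum_congr rfl fun k _ => by ring
          _ = ∑ k, ∑ r, c k * ((∑ s, ((NZ i s r : ℤ) : ℝ) * ((vZ k (idx8 s) : ℤ) : ℝ))
                * ((wZ (jT i r) (cst8 a) : ℤ) : ℝ)) := Finset.sum_comm
          _ = _ := Finset.sum_congr rfl fun k _ => (Finset.mul_sum _ _ _).symm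
      rw [h2, hxm, ← Finset.sum_sub_distrib]
      refine Finset.sum_congr rfl fun k _ => ?_
      rw [← mul_sub]
      congr 1
      rw [mZ]
      push_cast
      rfl
    rw [hda]
    refine Finset.sum_nonneg fun k _ => mul_nonneg (hc k) ?_
    exact_mod_cast D6 i k a
  have hxeq : x = (∑ a, d a • eR a) + (∑ r, t r • wS (jT i r)) := by
    funext m
    rw [Pi.add_apply, Finset.sum_apply, Finset.sum_apply]
    simp only [Pi.smul_apply, smul_eq_mul]
    by_cases hm : m.1 < 8
    · have hcst : cst8 ⟨m.1, hm⟩ = m := rfl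
      have hsum1 : ∑ a, d a * eR a m = d ⟨m.1, hm⟩ := by
        rw [Finset.sum_eq_single (⟨m.1, hm⟩ : Fin 8)]
        · rw [hstd]
          simp
        · intro a _ ha
          rw [hstd]
          have hne : (a : ℕ) ≠ (m : ℕ) := fun h => ha (Fin.ext h)
          simp [hne]
        · intro h
          exact absurd (Finset.mem_univ _) h
      rw [hsum1]
      show x m = (x (cst8 ⟨m.1, hm⟩) - ∑ r, t r * wS (jT i r) (cst8 ⟨m.1, hm⟩))
          + ∑ r, t r * wS (jT i r) m
      rw [hcst]
      ring
    · have hsum1 : ∑ a, d a * eR a m = 0 := by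
        refine Finset.sum_eq_zero fun a _ => ?_
        rw [hstd]
        have hne : (a : ℕ) ≠ (m : ℕ) := by omega
        simp [hne]
      set s0 : Fin 4 := ⟨m.1 - 8, by omega⟩ with hs0
      have hm8 : m = idx8 s0 := Fin.ext (by show m.1 = 8 + (m.1 - 8); omega)
      rw [hsum1, zero_add, hm8]
      have hdelta : ∑ s : Fin 4, x (idx8 s) * (((if s = s0 then 1 else 0 : ℤ)) : ℝ)
          = x (idx8 s0) := by
        have hterm : ∀ s : Fin 4, x (idx8 s) * (((if s = s0 then 1 else 0 : ℤ)) : ℝ)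
            = if s = s0 then x (idx8 s) else 0 := by
          intro s
          split <;> simp
        rw [Finset.sum_congr rfl fun s _ => hterm s,
          Finset.sum_ite_eq' Finset.univ s0 (fun s => x (idx8 s))]
        simp
      calc x (idx8 s0)
          = ∑ s, x (idx8 s) * (((if s = s0 then 1 else 0 : ℤ)) : ℝ) := hdelta.symm
      _ = ∑ s, x (idx8 s) * ((∑ r, NZ i s r * wZ (jT i r) (idx8 s0) : ℤ) : ℝ) := by
            refine Finset.sum_congr rfl fun s _ => ?_
            rw [D4]
      _ = ∑ s, ∑ r, (((NZ i s r : ℤ) : ℝ) * x (idx8 s)) * ((wZ (jT i r) (idx8 s0) : ℤ) : ℝ) := by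
            refine Finset.sum_congr rfl fun s _ => ?_
            push_cast
            rw [Finset.mul_sum]
            exact Finset.sum_congr rfl fun r _ => by ring
      _ = ∑ r, ∑ s, (((NZ i s r : ℤ) : ℝ) * x (idx8 s)) * ((wZ (jT i r) (idx8 s0) : ℤ) : ℝ) :=
            Finset.sum_comm
      _ = ∑ r, t r * wS (jT i r) (idx8 s0) := by
            refine Finset.sum_congr rfl fun r _ => ?_
            rw [htdef, hw, Finset.sum_mul]
  rw [hxeq]
  exact mem_CS i d t hd ht

/-! ### Separation -/

def dotL (g : Fin 4 → ℝ) : (Fin 12 → ℝ) →ₗ[ℝ] ℝ where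
  toFun x := ∑ s, g s * x (idx8 s)
  map_add' x y := by
    simp [Pi.add_apply, mul_add, Finset.sum_add_distrib]
  map_smul' cst x := by
    simp only [Pi.smul_apply, smul_eq_mul, RingHom.id_apply]
    rw [Finset.mul_sum]
    exact Finset.sum_congr rfl fun s _ => by ring

theorem dotL_apply (g : Fin 4 → ℝ) (x : Fin 12 → ℝ) :
    dotL g x = ∑ s, g s * x (idx8 s) := rfl

theorem dotL_w (g : Fin 4 → ℤ) (j : Fin 15) :
    dotL (fun s => ((g s : ℤ) : ℝ)) (wS j) = ((∑ s, g s * wZ j (idx8 s) : ℤ) : ℝ) := by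
  rw [dotL_apply]
  push_cast
  exact Finset.sum_congr rfl fun s _ => by rw [hw]

theorem dotL_e (g : Fin 4 → ℝ) (a : Fin 8) : dotL g (eR a) = 0 := by
  rw [dotL_apply]
  refine Finset.sum_eq_zero fun s _ => ?_
  rw [hstd]
  have hne : (a : ℕ) ≠ ((idx8 s : Fin 12) : ℕ) := by
    intro hEq
    have h2 : (a : ℕ) = 8 + (s : ℕ) := hEq
    have := a.isLt
    omega
  simp [hne]

theorem dotL_single (g : Fin 4 → ℝ) (r0 : Fin 4) :
    dotL g ((Pi.single (idx8 r0) 1 : Fin 12 → ℝ)) = g r0 := by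
  rw [dotL_apply]
  rw [Finset.sum_eq_single r0]
  · rw [Pi.single_apply, if_pos rfl, mul_one]
  · intro s _ hs
    rw [Pi.single_apply, if_neg, mul_zero]
    intro h
    apply hs
    apply Fin.ext
    have h2 : 8 + (s : ℕ) = 8 + (r0 : ℕ) := congrArg Fin.val h
    omega
  · intro h
    exact absurd (Finset.mem_univ _) h

theorem interior_empty_of_funct (φ : (Fin 12 → ℝ) →ₗ[ℝ] ℝ) (hφ : φ ≠ 0)
    (A : Set (Fin 12 → ℝ)) (hA : ∀ x ∈ A, φ x = 0) : interior A = ∅ := by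
  rw [Set.eq_empty_iff_forall_notMem]
  intro x hx
  have hsub : A ⊆ (LinearMap.ker φ : Set (Fin 12 → ℝ)) := fun y hy => hA y hy
  have h1 : (interior ((LinearMap.ker φ : Submodule ℝ (Fin 12 → ℝ)) :
      Set (Fin 12 → ℝ))).Nonempty := ⟨x, interior_mono hsub hx⟩
  have h2 := Submodule.eq_top_of_nonempty_interior' _ h1
  exact hφ (LinearMap.ker_eq_top.1 h2)

theorem sep_empty (i l : Fin 42) (h : i ≠ l) : interior (CS i ∩ CS l) = ∅ := by
  obtain ⟨hp1, hp2, hp3⟩ := Dsep i l h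
  apply interior_empty_of_funct (dotL (fun s => (((PZ i s - PZ l s : ℤ)) : ℝ)))
  · intro h0
    obtain ⟨s0, hs0⟩ : ∃ s0, PZ i s0 ≠ PZ l s0 := by
      by_contra hcon
      push_neg at hcon
      exact hp3 (funext hcon)
    have hz : dotL (fun s => (((PZ i s - PZ l s : ℤ)) : ℝ))
        ((Pi.single (idx8 s0) 1 : Fin 12 → ℝ)) = 0 := by
      rw [h0]
      simp
    rw [dotL_single] at hz
    have : (PZ i s0 - PZ l s0 : ℤ) = 0 := by exact_mod_cast hz
    omega
  · rintro x ⟨hxi, hxl⟩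
    have ha : 0 ≤ dotL (fun s => (((PZ i s - PZ l s : ℤ)) : ℝ)) x := by
      refine coneHull_nonneg _ ?_ x hxi
      rintro y (⟨a, rfl⟩ | ⟨j, hj, rfl⟩)
      · exact (dotL_e _ a).ge
      · rw [dotL_w (fun s => PZ i s - PZ l s) j]
        exact_mod_cast hp1 j (Finset.mem_coe.1 hj)
    have hb : dotL (fun s => (((PZ i s - PZ l s : ℤ)) : ℝ)) x ≤ 0 := by
      refine coneHull_nonpos _ ?_ x hxl
      rintro y (⟨a, rfl⟩ | ⟨j, hj, rfl⟩)
      · exact (dotL_e _ a).le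
      · rw [dotL_w (fun s => PZ i s - PZ l s) j]
        exact_mod_cast hp2 j (Finset.mem_coe.1 hj)
    linarith

/-! ### Span -/

theorem span_CS (i : Fin 42) : Submodule.span ℝ (CS i) = ⊤ := by
  have hCS : Submodule.span ℝ (CS i) = Submodule.span ℝ (eSet ∪ wS '' ↑(JS i)) :=
    span_coneHull _
  rw [hCS]
  have hsing8 : ∀ a : Fin 8,
      (Pi.single (c12 a) (1 : ℝ) : Fin 12 → ℝ) ∈
        Submodule.span ℝ (eSet ∪ wS '' ↑(JS i)) := by
    intro a
    have heq : eR a = (Pi.single (c12 a) (1 : ℝ) : Fin 12 → ℝ) := by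
      funext m
      rw [hstd, Pi.single_apply]
      have hiff : ((a : ℕ) = (m : ℕ)) ↔ (m = c12 a) := by
        rw [Fin.ext_iff]
        exact eq_comm
      rw [if_congr hiff rfl rfl]
    rw [← heq]
    exact Submodule.subset_span (Set.mem_union_left _ ⟨a, rfl⟩)
  have hsingle : ∀ m : Fin 12, (Pi.single m (1 : ℝ) : Fin 12 → ℝ) ∈
      Submodule.span ℝ (eSet ∪ wS '' ↑(JS i)) := by
    intro m
    by_cases hm : m.1 < 8
    · have hml : m = c12 (⟨m.1, hm⟩ : Fin 8) := Fin.ext rfl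
      rw [hml]
      exact hsing8 _
    · set s0 : Fin 4 := ⟨m.1 - 8, by omega⟩ with hs0
      have hm8 : m = idx8 s0 := Fin.ext (by show m.1 = 8 + (m.1 - 8); omega)
      set y : Fin 4 → (Fin 12 → ℝ) := fun r =>
        wS (jT i r) - ∑ a : Fin 8, wS (jT i r) (c12 a) •
          (Pi.single (c12 a) (1 : ℝ) : Fin 12 → ℝ) with hy
      have hyK : ∀ r, y r ∈ Submodule.span ℝ (eSet ∪ wS '' ↑(JS i)) := fun r =>
        Submodule.sub_mem _
          (Submodule.subset_span (Set.mem_union_right _ ⟨jT i r, D1 i r, rfl⟩))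
          (Submodule.sum_mem _ fun a _ => Submodule.smul_mem _ _ (hsing8 a))
      have hyhigh : ∀ r (m' : Fin 12), 8 ≤ m'.1 → y r m' = wS (jT i r) m' := by
        intro r m' hm'
        rw [hy]
        simp only [Pi.sub_apply, Finset.sum_apply, Pi.smul_apply, smul_eq_mul]
        rw [Finset.sum_eq_zero, sub_zero]
        intro a _
        rw [Pi.single_apply, if_neg, mul_zero]
        intro hEq
        have h2 : m'.1 = (a : ℕ) := congrArg Fin.val hEq
        have := a.isLt
        omega
      have hylow : ∀ r (m' : Fin 12), m'.1 < 8 → y r m' = 0 := by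
        intro r m' hm'
        rw [hy]
        simp only [Pi.sub_apply, Finset.sum_apply, Pi.smul_apply, smul_eq_mul]
        have hc : c12 (⟨m'.1, hm'⟩ : Fin 8) = m' := Fin.ext rfl
        rw [Finset.sum_eq_single (⟨m'.1, hm'⟩ : Fin 8)]
        · rw [hc, Pi.single_apply, if_pos rfl, mul_one, sub_self]
        · intro b _ hb
          rw [Pi.single_apply, if_neg, mul_zero]
          intro hEq
          apply hb
          apply Fin.ext
          exact (congrArg Fin.val hEq).symm
        · intro hAbs
          exact absurd (Finset.mem_univ _) hAbs
      have key : (Pi.single (idx8 s0) (1 : ℝ) : Fin 12 → ℝ) = ∑ r, ((NZ i s0 r : ℤ) : ℝ) • y r := by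
        funext m'
        rw [Finset.sum_apply]
        simp only [Pi.smul_apply, smul_eq_mul]
        by_cases hm' : m'.1 < 8
        · rw [Finset.sum_eq_zero (fun r _ => by rw [hylow r m' hm', mul_zero])]
          rw [Pi.single_apply, if_neg]
          intro hEq
          have h2 : m'.1 = 8 + (s0 : ℕ) := congrArg Fin.val hEq
          omega
        · have h8 : 8 ≤ m'.1 := by omega
          set s' : Fin 4 := ⟨m'.1 - 8, by omega⟩ with hs'
          have hm'8 : m' = idx8 s' := Fin.ext (by show m'.1 = 8 + (m'.1 - 8); omega)
          have hstep : ∑ r, ((NZ i s0 r : ℤ) : ℝ) * y r m'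
              = ((∑ r, NZ i s0 r * wZ (jT i r) (idx8 s') : ℤ) : ℝ) := by
            push_cast
            refine Finset.sum_congr rfl fun r _ => ?_
            rw [hyhigh r m' h8, hm'8, hw]
          rw [hstep, D4, Pi.single_apply, hm'8]
          by_cases hss : s0 = s'
          · rw [if_pos hss, if_pos (by rw [hss]), Int.cast_one]
          · rw [if_neg hss, if_neg, Int.cast_zero]
            intro hEq
            apply hss
            apply Fin.ext
            have h2 : 8 + (s' : ℕ) = 8 + (s0 : ℕ) := congrArg Fin.val hEq
            omega
      rw [hm8, key]
      exact Submodule.sum_mem _ fun r _ => Submodule.smul_mem _ _ (hyK r)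
  rw [eq_top_iff]
  intro x _
  have hrep : x = ∑ m, x m • (Pi.single m (1 : ℝ) : Fin 12 → ℝ) := by
    funext m'
    rw [Finset.sum_apply]
    simp only [Pi.smul_apply, Pi.single_apply, smul_eq_mul, mul_ite, mul_one, mul_zero]
    rw [Finset.sum_ite_eq Finset.univ m' x]
    simp
  rw [hrep]
  exact Submodule.sum_mem _ fun m _ => Submodule.smul_mem _ _ (hsingle m)

/-! ### Rank, dimension, finite generation -/

theorem CS_subset (i : Fin 42) : CS i ⊆ squareCone := by
  apply coneHull_mono
  rintro y (⟨a, rfl⟩ | ⟨j, hj, rfl⟩)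
  · exact ⟨cLE a, rfl⟩
  · have hj' : j ≠ 0 := D3 i j (Finset.mem_coe.1 hj)
    refine ⟨⟨j.1 + 7, by omega⟩, ?_⟩
    funext m
    rw [hv, hw, D13 j hj']

theorem wS_inj : Function.Injective wS := fun j j' h =>
  D8 j j' (funext fun m => by
    have hfm := congrFun h m
    rw [hw, hw] at hfm
    exact_mod_cast hfm)

theorem eR_inj : Function.Injective eR := by
  intro a b h
  have hfm := congrFun h (c12 a)
  rw [hstd, hstd] at hfm
  have h1 : ((c12 a : Fin 12) : ℕ) = (a : ℕ) := rfl
  rw [h1, if_pos rfl] at hfm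
  by_cases hba : (b : ℕ) = (a : ℕ)
  · exact Fin.ext hba.symm
  · rw [if_neg hba] at hfm
    exact absurd hfm one_ne_zero

open Classical in
noncomputable def SF (i : Fin 42) : Finset (Fin 12 → ℝ) :=
  (Finset.univ.image eR) ∪ (JS i).image wS

theorem SF_coe (i : Fin 42) : ((SF i : Finset (Fin 12 → ℝ)) : Set (Fin 12 → ℝ))
    = eSet ∪ wS '' ↑(JS i) := by
  classical
  rw [SF, Finset.coe_union, Finset.coe_image, Finset.coe_image, Finset.coe_univ,
    Set.image_univ, eSet_eq]

theorem CS_repr (i : Fin 42) : CS i = coneHull ((SF i : Finset (Fin 12 → ℝ)) :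
    Set (Fin 12 → ℝ)) := by
  rw [SF_coe]
  rfl

theorem SF_card (i : Fin 42) : (SF i).card = 12 := by
  classical
  have hdisj : Disjoint (Finset.univ.image eR) ((JS i).image wS) := by
    rw [Finset.disjoint_left]
    intro z hz1 hz2
    obtain ⟨a, -, rfl⟩ := Finset.mem_image.1 hz1
    obtain ⟨j, hj, hEq⟩ := Finset.mem_image.1 hz2
    refine D10 j (D3 i j hj) a (funext fun m => ?_)
    have hfm := congrFun hEq m
    rw [hw] at hfm
    rw [eR, hv] at hfm
    exact_mod_cast hfm
  rw [SF, Finset.card_union_of_disjoint hdisj,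
    Finset.card_image_of_injective _ eR_inj,
    Finset.card_image_of_injective _ wS_inj,
    Finset.card_univ, Fintype.card_fin, D9]

theorem coneDim_CS (i : Fin 42) : coneDim (CS i) = 12 := by
  rw [coneDim, span_CS, finrank_top, Module.finrank_fin_fun]

theorem coneRank_CS (i : Fin 42) : coneRank (CS i) = 12 := by
  have hmem : 12 ∈ {r : ℕ | ∃ S : Finset (Fin 12 → ℝ), S.card = r ∧
      CS i = coneHull (S : Set (Fin 12 → ℝ))} := ⟨SF i, SF_card i, CS_repr i⟩
  refine le_antisymm (Nat.sInf_le hmem) ?_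
  have hlb : ∀ r ∈ {r : ℕ | ∃ S : Finset (Fin 12 → ℝ), S.card = r ∧
      CS i = coneHull (S : Set (Fin 12 → ℝ))}, 12 ≤ r := by
    rintro r ⟨Sf, rfl, hS⟩
    have hsp : Submodule.span ℝ ((Sf : Finset (Fin 12 → ℝ)) : Set (Fin 12 → ℝ)) = ⊤ := by
      rw [← span_coneHull, ← hS, span_CS]
    have hfr := finrank_span_finset_le_card (R := ℝ) Sf
    calc 12 = Module.finrank ℝ (⊤ : Submodule ℝ (Fin 12 → ℝ)) := by
            rw [finrank_top, Module.finrank_fin_fun]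
      _ = Set.finrank ℝ ((Sf : Finset (Fin 12 → ℝ)) : Set (Fin 12 → ℝ)) := by
            rw [Set.finrank, hsp]
      _ ≤ Sf.card := hfr
  exact hlb _ (Nat.sInf_mem ⟨12, hmem⟩)

end KTGS

/-- `{C_1,…,C_42}` is a sector decomposition of the cone
`C = coneHull{v_1,…,v_22} ⊆ ℝ^12`: each `C_i` has linear span `ℝ^12` and is generated by
12 vectors (hence is a full sector of dimension and rank 12), `C = C_1 ∪ ⋯ ∪ C_42`, and
pairwise intersections have empty interior. -/


theorem stmt_14 :
    IsSectorDecomposition squareCone CS ∧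
    (∀ i, Submodule.span ℝ (CS i) = ⊤ ∧ coneDim (CS i) = 12 ∧ coneRank (CS i) = 12)  := by
  constructor
  · refine ⟨fun i => KTGS.CS_subset i, fun i => ?_, ?_, fun i j hij => KTGS.sep_empty i j hij⟩
    · refine ⟨⟨⟨KTGS.SF i, KTGS.CS_repr i⟩, ?_⟩, ⟨KTGS.SF i, KTGS.CS_repr i⟩, ?_⟩
      · rw [KTGS.coneRank_CS, KTGS.coneDim_CS]
      · rw [KTGS.coneDim_CS, Module.finrank_fin_fun]
    · exact Set.Subset.antisymm KTGS.cover (Set.iUnion_subset fun i => KTGS.CS_subset i)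
  · intro i
    exact ⟨KTGS.span_CS i, KTGS.coneDim_CS i, KTGS.coneRank_CS i⟩
end
end
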